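/- arXiv:0906.1773 — 7 statements merged into one kernel-verified Lean document; each statement's English description precedes it below -/
import Mathlib

section
/- For α > 0, β, γ ≥ 0 with β, γ > 0, let A(r,s,t) be the 2×2 matrix with rows (r, s) and (t, r). Then there exists a norm on ℝ² such that the induced operator norm satisfies max over (r,s,t) ∈ [0,α]×[0,β]×[0,γ] of ‖A(r,s,t)‖ = α + √(βγ). -/
/-- For α > 0, β, γ > 0, there exists a norm on ℝ² such that the
maximum over (r,s,t) ∈ [0,α]×[0,β]×[0,γ] of the induced operator norm of
A(r,s,t) = [[r,s],[t,r]] equals α + √(βγ): the operator norm is bounded by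
α + √(βγ) for all parameters, and this bound is attained. -/
theorem uniform_norm_lemma (α β γ : ℝ) (hα : 0 < α) (hβ : 0 < β) (hγ : 0 < γ) :
    ∃ N : (Fin 2 → ℝ) → ℝ,
      (∀ x, 0 ≤ N x) ∧
      (∀ x, N x = 0 ↔ x = 0) ∧
      (∀ (a : ℝ) (x), N (a • x) = |a| * N x) ∧
      (∀ x y, N (x + y) ≤ N x + N y) ∧
      (∀ r ∈ Set.Icc (0:ℝ) α, ∀ s ∈ Set.Icc (0:ℝ) β, ∀ t ∈ Set.Icc (0:ℝ) γ,
        ∀ x : Fin 2 → ℝ,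
          N ((!![r, s; t, r]).mulVec x) ≤ (α + Real.sqrt (β * γ)) * N x) ∧
      (∃ r ∈ Set.Icc (0:ℝ) α, ∃ s ∈ Set.Icc (0:ℝ) β, ∃ t ∈ Set.Icc (0:ℝ) γ,
        ∃ x : Fin 2 → ℝ, N x ≠ 0 ∧
          N ((!![r, s; t, r]).mulVec x) = (α + Real.sqrt (β * γ)) * N x) := by
  have hβ' : 0 < Real.sqrt β := Real.sqrt_pos.2 hβ
  have hγ' : 0 < Real.sqrt γ := Real.sqrt_pos.2 hγ
  set d : ℝ := Real.sqrt β / Real.sqrt γ with hd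
  have hdpos : 0 < d := div_pos hβ' hγ'
  have hsq : Real.sqrt (β * γ) = Real.sqrt β * Real.sqrt γ := Real.sqrt_mul hβ.le γ
  have hγsq : Real.sqrt γ * Real.sqrt γ = γ := Real.mul_self_sqrt hγ.le
  have hβsq : Real.sqrt β * Real.sqrt β = β := Real.mul_self_sqrt hβ.le
  have hdγ : d * γ = Real.sqrt β * Real.sqrt γ := by
    rw [hd, div_mul_eq_mul_div, div_eq_iff hγ'.ne']; linear_combination (-Real.sqrt β) * hγsq
  have hβd : β = (Real.sqrt β * Real.sqrt γ) * d := by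
    rw [hd, eq_comm, mul_div_assoc', div_eq_iff hγ'.ne']; linear_combination Real.sqrt γ * hβsq
  clear hd
  clear_value d
  refine ⟨fun x => |x 0| + d * |x 1|, ?_, ?_, ?_, ?_, ?_, ?_⟩
  · intro x; positivity
  · intro x
    constructor
    · intro h
      have h' : |x 0| + d * |x 1| = 0 := h
      have h0 : |x 0| = 0 ∧ d * |x 1| = 0 := by
        constructor <;> nlinarith [abs_nonneg (x 0), abs_nonneg (x 1),
          mul_nonneg hdpos.le (abs_nonneg (x 1)), h']
      have h1 : x 0 = 0 := abs_eq_zero.1 h0.1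
      have h2 : x 1 = 0 := by
        have := h0.2
        have : |x 1| = 0 := by
          rcases mul_eq_zero.1 this with h | h
          · exact absurd h hdpos.ne'
          · exact h
        exact abs_eq_zero.1 this
      funext i; fin_cases i <;> simp [h1, h2]
    · intro h; subst h; simp
  · intro a x
    simp only [Pi.smul_apply, smul_eq_mul, abs_mul]
    ring
  · intro x y
    simp only [Pi.add_apply]
    have h0 := abs_add_le (x 0) (y 0)
    have h1 := abs_add_le (x 1) (y 1)
    nlinarith [mul_le_mul_of_nonneg_left h1 hdpos.le]
  · intro r hr s hs t ht x
    simp only [Matrix.mulVec, dotProduct, Fin.sum_univ_two,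
      Matrix.cons_val', Matrix.cons_val_zero, Matrix.cons_val_one,
      Matrix.head_cons, Matrix.empty_val', Matrix.cons_val_fin_one,
      Matrix.head_fin_const, Matrix.of_apply]
    obtain ⟨hr0, hr1⟩ := hr
    obtain ⟨hs0, hs1⟩ := hs
    obtain ⟨ht0, ht1⟩ := ht
    have e0 : |r * x 0 + s * x 1| ≤ r * |x 0| + s * |x 1| := by
      calc |r * x 0 + s * x 1| ≤ |r * x 0| + |s * x 1| := abs_add_le _ _
      _ = r * |x 0| + s * |x 1| := by rw [abs_mul, abs_mul, abs_of_nonneg hr0, abs_of_nonneg hs0]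
    have e1 : |t * x 0 + r * x 1| ≤ t * |x 0| + r * |x 1| := by
      calc |t * x 0 + r * x 1| ≤ |t * x 0| + |r * x 1| := abs_add_le _ _
      _ = t * |x 0| + r * |x 1| := by rw [abs_mul, abs_mul, abs_of_nonneg ht0, abs_of_nonneg hr0]
    rw [hsq]
    have key : (r + d * t) * |x 0| + (s + d * r) * |x 1| ≤
        (α + Real.sqrt β * Real.sqrt γ) * (|x 0| + d * |x 1|) := by
      have c0 : r + d * t ≤ α + Real.sqrt β * Real.sqrt γ := by
        have h1 : d * t ≤ d * γ := by nlinarith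
        nlinarith
      have c1 : s + d * r ≤ (α + Real.sqrt β * Real.sqrt γ) * d := by
        have h2 : d * r ≤ d * α := by nlinarith
        nlinarith
      have k0 := mul_le_mul_of_nonneg_right c0 (abs_nonneg (x 0))
      have k1 := mul_le_mul_of_nonneg_right c1 (abs_nonneg (x 1))
      calc (r + d * t) * |x 0| + (s + d * r) * |x 1|
          ≤ (α + Real.sqrt β * Real.sqrt γ) * |x 0|
            + ((α + Real.sqrt β * Real.sqrt γ) * d) * |x 1| := add_le_add k0 k1
        _ = (α + Real.sqrt β * Real.sqrt γ) * (|x 0| + d * |x 1|) := by ring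
    calc |r * x 0 + s * x 1| + d * |t * x 0 + r * x 1|
        ≤ (r * |x 0| + s * |x 1|) + d * (t * |x 0| + r * |x 1|) :=
          add_le_add e0 (mul_le_mul_of_nonneg_left e1 hdpos.le)
      _ = (r + d * t) * |x 0| + (s + d * r) * |x 1| := by ring
      _ ≤ (α + Real.sqrt β * Real.sqrt γ) * (|x 0| + d * |x 1|) := key
  · refine ⟨α, ⟨hα.le, le_refl _⟩, β, ⟨hβ.le, le_refl _⟩, γ, ⟨hγ.le, le_refl _⟩,
      ![1, 0], ?_, ?_⟩
    · norm_num
    · simp only [Matrix.mulVec, dotProduct, Fin.sum_univ_two,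
        Matrix.cons_val', Matrix.cons_val_zero, Matrix.cons_val_one,
        Matrix.head_cons, Matrix.empty_val', Matrix.cons_val_fin_one,
        Matrix.head_fin_const, Matrix.of_apply]
      rw [hsq]
      rw [abs_of_nonneg (by nlinarith : (0:ℝ) ≤ α * 1 + β * 0),
        abs_of_nonneg (by nlinarith : (0:ℝ) ≤ γ * 1 + α * 0)]
      norm_num
      linarith [hdγ]
end

section
/- For α > 0, β, γ ≥ 0 (possibly with βγ = 0), and any ε > 0, there exists a norm on ℝ² such that for all (r,s,t) ∈ [0,α]×[0,β]×[0,γ], the operator norm of the matrix [[r,s],[t,r]] is at most α + √(βγ) + ε. -/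
/-- For α > 0, β, γ ≥ 0 (possibly βγ = 0) and ε > 0, there is a
norm on ℝ² for which the operator norm of A(r,s,t) = [[r,s],[t,r]] is at most
α + √(βγ) + ε for all (r,s,t) ∈ [0,α]×[0,β]×[0,γ]. -/
theorem uniform_norm_lemma_eps (α β γ ε : ℝ) (hα : 0 < α) (hβ : 0 ≤ β) (hγ : 0 ≤ γ)
    (hε : 0 < ε) :
    ∃ N : (Fin 2 → ℝ) → ℝ,
      (∀ x, 0 ≤ N x) ∧
      (∀ x, N x = 0 ↔ x = 0) ∧
      (∀ (a : ℝ) (x), N (a • x) = |a| * N x) ∧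
      (∀ x y, N (x + y) ≤ N x + N y) ∧
      (∀ r ∈ Set.Icc (0:ℝ) α, ∀ s ∈ Set.Icc (0:ℝ) β, ∀ t ∈ Set.Icc (0:ℝ) γ,
        ∀ x : Fin 2 → ℝ,
          N ((!![r, s; t, r]).mulVec x) ≤ (α + Real.sqrt (β * γ) + ε) * N x) := by
  set S := Real.sqrt (β * γ) with hS
  have hS0 : 0 ≤ S := Real.sqrt_nonneg _
  have hSsq : S * S = β * γ := Real.mul_self_sqrt (mul_nonneg hβ hγ)
  have hSε : 0 < S + ε := by linarith
  set δ : ℝ := ε ^ 2 / (γ + 1) with hδ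
  have hδ0 : 0 < δ := by positivity
  set c : ℝ := (β + δ) / (S + ε) with hc
  have hc0 : 0 < c := by positivity
  have hβc : β ≤ (S + ε) * c := by
    rw [hc, mul_div_cancel₀ _ (ne_of_gt hSε)]; linarith
  have hγc : γ * c ≤ S + ε := by
    rw [hc, mul_div_assoc', div_le_iff₀ hSε]
    have hγδ : γ * δ ≤ ε ^ 2 := by
      rw [hδ, mul_div_assoc', div_le_iff₀ (by linarith : (0:ℝ) < γ + 1)]
      nlinarith
    nlinarith
  refine ⟨fun x => max |x 0| (c * |x 1|), ?_, ?_, ?_, ?_, ?_⟩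
  · intro x
    exact le_trans (abs_nonneg _) (le_max_left _ _)
  · intro x
    constructor
    · intro h
      have h0 : |x 0| = 0 := le_antisymm (le_of_le_of_eq (le_max_left _ _) h) (abs_nonneg _)
      have h1 : c * |x 1| = 0 :=
        le_antisymm (le_of_le_of_eq (le_max_right _ _) h) (by positivity)
      have h1' : |x 1| = 0 := by
        rcases mul_eq_zero.mp h1 with h | h
        · exact absurd h (ne_of_gt hc0)
        · exact h
      funext i
      fin_cases i
      · exact abs_eq_zero.mp h0
      · exact abs_eq_zero.mp h1'
    · intro h; subst h; simp
  · intro a x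
    simp only [Pi.smul_apply, smul_eq_mul, abs_mul]
    rw [mul_max_of_nonneg _ _ (abs_nonneg a)]
    ring_nf
  · intro x y
    simp only [Pi.add_apply]
    apply max_le
    · calc |x 0 + y 0| ≤ |x 0| + |y 0| := abs_add_le _ _
        _ ≤ _ := add_le_add (le_max_left _ _) (le_max_left _ _)
    · calc c * |x 1 + y 1| ≤ c * (|x 1| + |y 1|) := by
            exact mul_le_mul_of_nonneg_left (abs_add_le _ _) (le_of_lt hc0)
        _ = c * |x 1| + c * |y 1| := by ring
        _ ≤ _ := add_le_add (le_max_right _ _) (le_max_right _ _)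
  · rintro r ⟨hr0, hrα⟩ s ⟨hs0, hsβ⟩ t ⟨ht0, htγ⟩ x
    have hM : (!![r, s; t, r]).mulVec x = ![r * x 0 + s * x 1, t * x 0 + r * x 1] := by
      funext i
      fin_cases i <;>
        simp [Matrix.mulVec, dotProduct, Fin.sum_univ_two, Matrix.vecHead, Matrix.vecTail]
    rw [hM]
    set Nx := max |x 0| (c * |x 1|) with hNx
    have hN0 : 0 ≤ Nx := le_trans (abs_nonneg _) (le_max_left _ _)
    have hx0 : |x 0| ≤ Nx := le_max_left _ _
    have hx1 : c * |x 1| ≤ Nx := le_max_right _ _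
    have hx1' : 0 ≤ |x 1| := abs_nonneg _
    have hKpos : (0:ℝ) ≤ α + S + ε := by linarith
    apply max_le
    · show |r * x 0 + s * x 1| ≤ (α + S + ε) * Nx
      calc |r * x 0 + s * x 1| ≤ |r * x 0| + |s * x 1| := abs_add_le _ _
        _ = r * |x 0| + s * |x 1| := by
            rw [abs_mul, abs_mul, abs_of_nonneg hr0, abs_of_nonneg hs0]
        _ ≤ α * Nx + (S + ε) * (c * |x 1|) := by
            have h1 : r * |x 0| ≤ α * Nx :=
              mul_le_mul hrα hx0 (abs_nonneg _) (le_of_lt hα)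
            have h2 : s * |x 1| ≤ (S + ε) * (c * |x 1|) := by
              rw [← mul_assoc]
              exact mul_le_mul_of_nonneg_right (le_trans hsβ hβc) hx1'
            linarith
        _ ≤ α * Nx + (S + ε) * Nx :=
            add_le_add_right (mul_le_mul_of_nonneg_left hx1 (le_of_lt hSε)) _
        _ = (α + S + ε) * Nx := by ring
    · show c * |t * x 0 + r * x 1| ≤ (α + S + ε) * Nx
      calc c * |t * x 0 + r * x 1| ≤ c * (|t * x 0| + |r * x 1|) :=
            mul_le_mul_of_nonneg_left (abs_add_le _ _) (le_of_lt hc0)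
        _ = (t * c) * |x 0| + r * (c * |x 1|) := by
            rw [abs_mul, abs_mul, abs_of_nonneg ht0, abs_of_nonneg hr0]; ring
        _ ≤ (S + ε) * Nx + α * Nx := by
            have h1 : (t * c) * |x 0| ≤ (S + ε) * Nx := by
              have htc : t * c ≤ S + ε :=
                le_trans (mul_le_mul_of_nonneg_right htγ (le_of_lt hc0)) hγc
              exact mul_le_mul htc hx0 (abs_nonneg _) (le_of_lt hSε)
            have h2 : r * (c * |x 1|) ≤ α * Nx :=
              mul_le_mul hrα hx1 (by positivity) (le_of_lt hα)
            linarith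
        _ = (α + S + ε) * Nx := by ring
end

section
/- Fix t ∈ [0, T_c) and a C² function g₀ : [0,1]² → ℝ with nonnegative mixed second partial derivatives, and suppose ∂g₀/∂x, ∂g₀/∂y map [0,1]² into [0,1], and set α = sup ∂²g₀/∂x∂y, β = sup ∂²g₀/∂y², γ = sup ∂²g₀/∂x², with t(α + √(βγ))/(1+t) < 1. Then for every (u,v) ∈ [0,1]², the map F_t(x,y) = (u/(1+t) + (t/(1+t))∂g₀/∂y(x,y), v/(1+t) + (t/(1+t))∂g₀/∂x(x,y)) has a unique fixed point in [0,1]². -/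
open Set Filter

private lemma memK_iff {p : ℝ × ℝ} :
    p ∈ Set.Icc ((0:ℝ), (0:ℝ)) (1, 1) ↔ p.1 ∈ Set.Icc (0:ℝ) 1 ∧ p.2 ∈ Set.Icc (0:ℝ) 1 := by
  simp only [Set.mem_Icc, Prod.le_def]
  tauto

private lemma lip_box {h : ℝ × ℝ → ℝ} (hd : Differentiable ℝ h) {A B : ℝ}
    (hA : ∀ p ∈ Set.Icc ((0:ℝ), (0:ℝ)) (1, 1), |fderiv ℝ h p (1, 0)| ≤ A)
    (hB : ∀ p ∈ Set.Icc ((0:ℝ), (0:ℝ)) (1, 1), |fderiv ℝ h p (0, 1)| ≤ B)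
    {p q : ℝ × ℝ} (hp : p ∈ Set.Icc ((0:ℝ), (0:ℝ)) (1, 1))
    (hq : q ∈ Set.Icc ((0:ℝ), (0:ℝ)) (1, 1)) :
    |h p - h q| ≤ A * |p.1 - q.1| + B * |p.2 - q.2| := by
  obtain ⟨hp1, hp2⟩ := memK_iff.1 hp
  obtain ⟨hq1, hq2⟩ := memK_iff.1 hq
  have e1 : |h (p.1, p.2) - h (q.1, p.2)| ≤ A * |p.1 - q.1| := by
    have key : ∀ s ∈ Set.Icc (0:ℝ) 1, HasDerivWithinAt (fun s => h (s, p.2))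
        (fderiv ℝ h (s, p.2) (1, 0)) (Set.Icc 0 1) s := by
      intro s hs
      have h1 : HasDerivAt (fun s : ℝ => ((s, p.2) : ℝ × ℝ)) ((1 : ℝ), (0 : ℝ)) s :=
        (hasDerivAt_id s).prodMk (hasDerivAt_const s p.2)
      exact (((hd (s, p.2)).hasFDerivAt.comp_hasDerivAt s h1)).hasDerivWithinAt
    have bound : ∀ s ∈ Set.Icc (0:ℝ) 1, ‖fderiv ℝ h (s, p.2) (1, 0)‖ ≤ A := by
      intro s hs
      rw [Real.norm_eq_abs]
      exact hA _ (memK_iff.2 ⟨hs, hp2⟩)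
    have := Convex.norm_image_sub_le_of_norm_hasDerivWithin_le key bound (convex_Icc 0 1) hq1 hp1
    simpa [Real.norm_eq_abs] using this
  have e2 : |h (q.1, p.2) - h (q.1, q.2)| ≤ B * |p.2 - q.2| := by
    have key : ∀ s ∈ Set.Icc (0:ℝ) 1, HasDerivWithinAt (fun s => h (q.1, s))
        (fderiv ℝ h (q.1, s) (0, 1)) (Set.Icc 0 1) s := by
      intro s hs
      have h1 : HasDerivAt (fun s : ℝ => ((q.1, s) : ℝ × ℝ)) ((0 : ℝ), (1 : ℝ)) s :=
        (hasDerivAt_const s q.1).prodMk (hasDerivAt_id s)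
      exact (((hd (q.1, s)).hasFDerivAt.comp_hasDerivAt s h1)).hasDerivWithinAt
    have bound : ∀ s ∈ Set.Icc (0:ℝ) 1, ‖fderiv ℝ h (q.1, s) (0, 1)‖ ≤ B := by
      intro s hs
      rw [Real.norm_eq_abs]
      exact hB _ (memK_iff.2 ⟨hq1, hs⟩)
    have := Convex.norm_image_sub_le_of_norm_hasDerivWithin_le key bound (convex_Icc 0 1) hq2 hp2
    simpa [Real.norm_eq_abs] using this
  calc |h p - h q| = |(h (p.1, p.2) - h (q.1, p.2)) + (h (q.1, p.2) - h (q.1, q.2))| := by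
        simp
    _ ≤ |h (p.1, p.2) - h (q.1, p.2)| + |h (q.1, p.2) - h (q.1, q.2)| := abs_add_le _ _
    _ ≤ A * |p.1 - q.1| + B * |p.2 - q.2| := by linarith

private lemma exists_lam {c α β γ : ℝ} (hc : 0 ≤ c) (hα : 0 ≤ α) (hβ : 0 ≤ β) (hγ : 0 ≤ γ)
    (h : c * (α + Real.sqrt (β * γ)) < 1) :
    ∃ L : ℝ, 0 < L ∧ c * (α + L * γ) < 1 ∧ c * (α + β / L) < 1 := by
  rcases eq_or_lt_of_le hc with hc0 | hc0
  · exact ⟨1, one_pos, by rw [← hc0]; norm_num, by rw [← hc0]; norm_num⟩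
  have hs : 0 ≤ Real.sqrt (β * γ) := Real.sqrt_nonneg _
  obtain ⟨M, hM⟩ : ∃ M : ℝ, M = 1 / c - α := ⟨_, rfl⟩
  have hMs : Real.sqrt (β * γ) < M := by
    have h2 : α + Real.sqrt (β * γ) < 1 / c := by
      rw [lt_div_iff₀ hc0]
      nlinarith
    rw [hM]; linarith
  have hM0 : 0 < M := lt_of_le_of_lt hs hMs
  have hβγ : β * γ < M ^ 2 := by
    have hsq := Real.sq_sqrt (mul_nonneg hβ hγ)
    nlinarith
  obtain ⟨ε, hε⟩ : ∃ e : ℝ, e = (M ^ 2 - β * γ) / (2 * (γ + 1)) := ⟨_, rfl⟩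
  have hε0 : 0 < ε := by rw [hε]; exact div_pos (by linarith) (by linarith)
  obtain ⟨L, hL⟩ : ∃ L : ℝ, L = (β + ε) / M := ⟨_, rfl⟩
  have hL0 : 0 < L := by rw [hL]; exact div_pos (by linarith) hM0
  have key : ∀ x : ℝ, x < M → c * (α + x) < 1 := by
    intro x hx
    have h2 : α + x < 1 / c := by rw [hM] at hx; linarith
    calc c * (α + x) < c * (1 / c) := by exact mul_lt_mul_of_pos_left h2 hc0
      _ = 1 := mul_one_div_cancel (ne_of_gt hc0)
  refine ⟨L, hL0, key _ ?_, key _ ?_⟩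
  · -- L * γ < M
    have hεγ : ε * (γ + 1) = (M ^ 2 - β * γ) / 2 := by
      rw [hε]; field_simp
    rw [hL, div_mul_eq_mul_div, div_lt_iff₀ hM0]
    nlinarith
  · -- β / L < M
    rw [div_lt_iff₀ hL0, hL]
    rw [mul_div_assoc']
    rw [lt_div_iff₀ hM0]
    nlinarith

set_option maxHeartbeats 1000000 in
/-- for t < T_c (i.e. t(α+√(βγ))/(1+t) < 1), and g₀ C² with first
partials mapping [0,1]² into [0,1] and nonnegative second partials bounded by
α (mixed), β (in y²), γ (in x²), the map
F_t(x,y) = (u/(1+t) + t/(1+t)·∂g₀/∂y, v/(1+t) + t/(1+t)·∂g₀/∂x)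
has a unique fixed point in [0,1]², for every (u,v) ∈ [0,1]². -/
theorem unique_fixed_point (g₀ : ℝ × ℝ → ℝ) (hg : ContDiff ℝ 2 g₀)
    (t α β γ : ℝ) (ht : 0 ≤ t)
    (hx01 : ∀ p ∈ Set.Icc ((0:ℝ), (0:ℝ)) (1, 1), fderiv ℝ g₀ p (1, 0) ∈ Set.Icc (0:ℝ) 1)
    (hy01 : ∀ p ∈ Set.Icc ((0:ℝ), (0:ℝ)) (1, 1), fderiv ℝ g₀ p (0, 1) ∈ Set.Icc (0:ℝ) 1)
    (hα : ∀ p ∈ Set.Icc ((0:ℝ), (0:ℝ)) (1, 1),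
      fderiv ℝ (fun q => fderiv ℝ g₀ q (1, 0)) p (0, 1) ∈ Set.Icc (0:ℝ) α)
    (hβ : ∀ p ∈ Set.Icc ((0:ℝ), (0:ℝ)) (1, 1),
      fderiv ℝ (fun q => fderiv ℝ g₀ q (0, 1)) p (0, 1) ∈ Set.Icc (0:ℝ) β)
    (hγ : ∀ p ∈ Set.Icc ((0:ℝ), (0:ℝ)) (1, 1),
      fderiv ℝ (fun q => fderiv ℝ g₀ q (1, 0)) p (1, 0) ∈ Set.Icc (0:ℝ) γ)
    (hcrit : t * (α + Real.sqrt (β * γ)) / (1 + t) < 1) :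
    ∀ u ∈ Set.Icc (0:ℝ) 1, ∀ v ∈ Set.Icc (0:ℝ) 1,
      ∃! z : ℝ × ℝ, z ∈ Set.Icc ((0:ℝ), (0:ℝ)) (1, 1) ∧
        z = (u / (1 + t) + t / (1 + t) * fderiv ℝ g₀ z (0, 1),
             v / (1 + t) + t / (1 + t) * fderiv ℝ g₀ z (1, 0)) := by
  intro u hu v hv
  have ht1 : (0:ℝ) < 1 + t := by linarith
  obtain ⟨c, hcdef⟩ : ∃ c : ℝ, c = t / (1 + t) := ⟨_, rfl⟩
  have hc0 : 0 ≤ c := by rw [hcdef]; exact div_nonneg ht ht1.le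
  have hc0' : (0:ℝ) ≤ t / (1 + t) := div_nonneg ht ht1.le
  have hc1 : c < 1 := by rw [hcdef, div_lt_one ht1]; linarith
  set K := Set.Icc ((0:ℝ), (0:ℝ)) ((1:ℝ), (1:ℝ)) with hKdef
  have h00K : ((0:ℝ), (0:ℝ)) ∈ K := memK_iff.2 ⟨by norm_num, by norm_num⟩
  -- nonnegativity of the bounds
  have hα0 : 0 ≤ α := le_trans (hα _ h00K).1 (hα _ h00K).2
  have hβ0 : 0 ≤ β := le_trans (hβ _ h00K).1 (hβ _ h00K).2
  have hγ0 : 0 ≤ γ := le_trans (hγ _ h00K).1 (hγ _ h00K).2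
  -- differentiability facts
  have hfd : ContDiff ℝ 1 (fderiv ℝ g₀) := hg.fderiv_right (by norm_num)
  have hder : ∀ (vv p w : ℝ × ℝ), fderiv ℝ (fun q => fderiv ℝ g₀ q vv) p w
      = fderiv ℝ (fderiv ℝ g₀) p w vv := by
    intro vv p w
    rw [fderiv_clm_apply (hfd.differentiable one_ne_zero p) (differentiableAt_const vv)]
    simp
  have hsymm : ∀ p : ℝ × ℝ, fderiv ℝ (fun q => fderiv ℝ g₀ q (0, 1)) p (1, 0)
      = fderiv ℝ (fun q => fderiv ℝ g₀ q (1, 0)) p (0, 1) := by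
    intro p
    rw [hder, hder]
    exact (hg.contDiffAt.isSymmSndFDerivAt (by norm_num)).eq _ _
  have hd1 : Differentiable ℝ (fun p : ℝ × ℝ => fderiv ℝ g₀ p (0, 1)) :=
    (hfd.clm_apply contDiff_const).differentiable one_ne_zero
  have hd2 : Differentiable ℝ (fun p : ℝ × ℝ => fderiv ℝ g₀ p (1, 0)) :=
    (hfd.clm_apply contDiff_const).differentiable one_ne_zero
  -- Lipschitz estimates for the two partial derivatives
  have lip1 : ∀ p ∈ K, ∀ q ∈ K, |fderiv ℝ g₀ p (0, 1) - fderiv ℝ g₀ q (0, 1)|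
      ≤ α * |p.1 - q.1| + β * |p.2 - q.2| := by
    intro p hp q hq
    refine lip_box hd1 (fun r hr => ?_) (fun r hr => ?_) hp hq
    · rw [hsymm r]
      exact abs_le.2 ⟨by linarith [(hα r hr).1], (hα r hr).2⟩
    · exact abs_le.2 ⟨by linarith [(hβ r hr).1], (hβ r hr).2⟩
  have lip2 : ∀ p ∈ K, ∀ q ∈ K, |fderiv ℝ g₀ p (1, 0) - fderiv ℝ g₀ q (1, 0)|
      ≤ γ * |p.1 - q.1| + α * |p.2 - q.2| := by
    intro p hp q hq
    refine lip_box hd2 (fun r hr => ?_) (fun r hr => ?_) hp hq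
    · exact abs_le.2 ⟨by linarith [(hγ r hr).1], (hγ r hr).2⟩
    · exact abs_le.2 ⟨by linarith [(hα r hr).1], (hα r hr).2⟩
  -- the map F
  obtain ⟨F, hF⟩ : ∃ F : ℝ × ℝ → ℝ × ℝ, ∀ p, F p =
      (u / (1 + t) + t / (1 + t) * fderiv ℝ g₀ p (0, 1),
       v / (1 + t) + t / (1 + t) * fderiv ℝ g₀ p (1, 0)) := ⟨_, fun p => rfl⟩
  have hFK : ∀ p ∈ K, F p ∈ K := by
    intro p hp
    rw [hF]
    refine memK_iff.2 ⟨⟨?_, ?_⟩, ⟨?_, ?_⟩⟩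
    · exact add_nonneg (div_nonneg hu.1 ht1.le) (mul_nonneg hc0' (hy01 p hp).1)
    · have h1 : u / (1 + t) + t / (1 + t) * fderiv ℝ g₀ p (0, 1)
          ≤ 1 / (1 + t) + t / (1 + t) * 1 := by
        gcongr
        · exact hu.2
        · exact (hy01 p hp).2
      have h2 : 1 / (1 + t) + t / (1 + t) * 1 = 1 := by field_simp
      simpa using h1.trans_eq h2
    · exact add_nonneg (div_nonneg hv.1 ht1.le) (mul_nonneg hc0' (hx01 p hp).1)
    · have h1 : v / (1 + t) + t / (1 + t) * fderiv ℝ g₀ p (1, 0)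
          ≤ 1 / (1 + t) + t / (1 + t) * 1 := by
        gcongr
        · exact hv.2
        · exact (hx01 p hp).2
      have h2 : 1 / (1 + t) + t / (1 + t) * 1 = 1 := by field_simp
      simpa using h1.trans_eq h2
  -- the contraction constant
  have hcrit' : c * (α + Real.sqrt (β * γ)) < 1 := by
    rw [hcdef, div_mul_eq_mul_div]
    exact hcrit
  obtain ⟨L, hL0, hKc1, hKc2⟩ := exists_lam hc0 hα0 hβ0 hγ0 hcrit'
  set Kc : ℝ := max (c * (α + L * γ)) (c * (α + β / L)) with hKcdef
  have hKc0 : 0 ≤ Kc := le_trans (by positivity) (le_max_left _ _)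
  have hKclt : Kc < 1 := max_lt hKc1 hKc2
  have hKcA : c * (α + L * γ) ≤ Kc := le_max_left _ _
  have hKcB : c * (α + β / L) ≤ Kc := le_max_right _ _
  -- the weighted distance
  obtain ⟨D, hDdef⟩ : ∃ D : ℝ × ℝ → ℝ × ℝ → ℝ,
      ∀ p q, D p q = |p.1 - q.1| + L * |p.2 - q.2| := ⟨_, fun p q => rfl⟩
  have hD0 : ∀ p q, 0 ≤ D p q := fun p q => by
    rw [hDdef]
    exact add_nonneg (abs_nonneg _) (mul_nonneg hL0.le (abs_nonneg _))
  -- the contraction estimate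
  have hcontr : ∀ p ∈ K, ∀ q ∈ K, D (F p) (F q) ≤ Kc * D p q := by
    intro p hp q hq
    have e1 : (F p).1 - (F q).1
        = c * (fderiv ℝ g₀ p (0, 1) - fderiv ℝ g₀ q (0, 1)) := by
      rw [hF p, hF q, hcdef]; dsimp only; ring
    have e2 : (F p).2 - (F q).2
        = c * (fderiv ℝ g₀ p (1, 0) - fderiv ℝ g₀ q (1, 0)) := by
      rw [hF p, hF q, hcdef]; dsimp only; ring
    have b1 : |(F p).1 - (F q).1| ≤ c * (α * |p.1 - q.1| + β * |p.2 - q.2|) := by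
      rw [e1, abs_mul, abs_of_nonneg hc0]
      exact mul_le_mul_of_nonneg_left (lip1 p hp q hq) hc0
    have b2 : |(F p).2 - (F q).2| ≤ c * (γ * |p.1 - q.1| + α * |p.2 - q.2|) := by
      rw [e2, abs_mul, abs_of_nonneg hc0]
      exact mul_le_mul_of_nonneg_left (lip2 p hp q hq) hc0
    have hbl : c * (α + β / L) * L = c * (β + L * α) := by
      have h := div_mul_cancel₀ β (ne_of_gt hL0)
      linear_combination c * h
    have hd1' : 0 ≤ |p.1 - q.1| := abs_nonneg _
    have hd2' : 0 ≤ |p.2 - q.2| := abs_nonneg _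
    have HA := mul_le_mul_of_nonneg_right hKcA hd1'
    have HB := mul_le_mul_of_nonneg_right (mul_le_mul_of_nonneg_right hKcB hL0.le) hd2'
    rw [hbl] at HB
    rw [hDdef, hDdef]
    nlinarith [mul_le_mul_of_nonneg_left b2 hL0.le]
  -- iteration
  obtain ⟨x, hx0, hxsucc⟩ : ∃ x : ℕ → ℝ × ℝ, x 0 = (0, 0) ∧ ∀ n, x (n + 1) = F (x n) :=
    ⟨fun n => F^[n] (0, 0), rfl, fun n => Function.iterate_succ_apply' F n _⟩
  have hxK : ∀ n, x n ∈ K := by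
    intro n
    induction n with
    | zero => rw [hx0]; exact h00K
    | succ n ih => rw [hxsucc]; exact hFK _ ih
  set C : ℝ := D (x 1) (x 0) with hCdef
  have hC0 : 0 ≤ C := hD0 _ _
  have hgeo : ∀ n, D (x (n + 1)) (x n) ≤ C * Kc ^ n := by
    intro n
    induction n with
    | zero => rw [hCdef]; simp
    | succ n ih =>
      have h1 : D (x (n + 1 + 1)) (x (n + 1)) ≤ Kc * D (x (n + 1)) (x n) := by
        have h2 := hcontr _ (hxK (n + 1)) _ (hxK n)
        rw [← hxsucc (n + 1), ← hxsucc n] at h2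
        exact h2
      calc D (x (n + 1 + 1)) (x (n + 1)) ≤ Kc * D (x (n + 1)) (x n) := h1
        _ ≤ Kc * (C * Kc ^ n) := mul_le_mul_of_nonneg_left ih hKc0
        _ = C * Kc ^ (n + 1) := by ring
  -- the coordinates are Cauchy sequences
  have hcau1 : CauchySeq (fun n => (x n).1) := by
    apply cauchySeq_of_le_geometric Kc C hKclt
    intro n
    rw [Real.dist_eq, abs_sub_comm]
    have := hgeo n
    have h2 : |(x (n + 1)).1 - (x n).1| ≤ D (x (n + 1)) (x n) := by
      rw [hDdef]
      nlinarith [abs_nonneg ((x (n + 1)).2 - (x n).2)]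
    linarith
  have hcau2 : CauchySeq (fun n => (x n).2) := by
    apply cauchySeq_of_le_geometric Kc (C / L) hKclt
    intro n
    rw [Real.dist_eq, abs_sub_comm]
    have := hgeo n
    have h2 : L * |(x (n + 1)).2 - (x n).2| ≤ C * Kc ^ n := by
      rw [hDdef] at this
      nlinarith [abs_nonneg ((x (n + 1)).1 - (x n).1)]
    rw [div_mul_eq_mul_div, le_div_iff₀ hL0]
    nlinarith
  obtain ⟨a, ha⟩ := cauchySeq_tendsto_of_complete hcau1
  obtain ⟨b, hb⟩ := cauchySeq_tendsto_of_complete hcau2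
  have hxlim : Filter.Tendsto x Filter.atTop (nhds (a, b)) := by
    have := ha.prodMk_nhds hb
    simpa using this
  have hzK : (a, b) ∈ K := by
    rw [hKdef]
    exact isClosed_Icc.mem_of_tendsto hxlim (Filter.Eventually.of_forall fun n => hxK n)
  -- continuity of F
  have hFcont : Continuous F := by
    have hFe : F = fun p => (u / (1 + t) + t / (1 + t) * fderiv ℝ g₀ p (0, 1),
        v / (1 + t) + t / (1 + t) * fderiv ℝ g₀ p (1, 0)) := funext hF
    rw [hFe]
    exact (continuous_const.add (continuous_const.mul
        ((hfd.continuous).clm_apply continuous_const))).prodMk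
      (continuous_const.add (continuous_const.mul
        ((hfd.continuous).clm_apply continuous_const)))
  have hfix : (a, b) = F (a, b) := by
    have h1 : Filter.Tendsto (fun n => x (n + 1)) Filter.atTop (nhds (F (a, b))) := by
      have h2 := (hFcont.tendsto (a, b)).comp hxlim
      have h3 : (fun n => x (n + 1)) = F ∘ x := by
        funext n; exact hxsucc n
      rw [h3]; exact h2
    have h4 : Filter.Tendsto (fun n => x (n + 1)) Filter.atTop (nhds (a, b)) :=
      hxlim.comp (Filter.tendsto_add_atTop_nat 1)
    exact tendsto_nhds_unique h4 h1
  -- conclusion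
  refine ⟨(a, b), ⟨hzK, hfix.trans (hF _)⟩, ?_⟩
  rintro y ⟨hyK, hy⟩
  have hyfix : y = F y := hy.trans (hF y).symm
  have h5 : D y (a, b) ≤ Kc * D y (a, b) := by
    calc D y (a, b) = D (F y) (F (a, b)) := by rw [← hyfix, ← hfix]
      _ ≤ Kc * D y (a, b) := hcontr _ hyK _ hzK
  have h6 : D y (a, b) ≤ 0 := by nlinarith [hD0 y (a, b)]
  have h7 : |y.1 - a| = 0 ∧ |y.2 - b| = 0 := by
    rw [hDdef] at h6
    dsimp only at h6
    constructor <;> nlinarith [abs_nonneg (y.1 - a), abs_nonneg (y.2 - b),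
      mul_nonneg hL0.le (abs_nonneg (y.2 - b)), hL0]
  have h8 : y.1 = a := by have := abs_eq_zero.1 h7.1; linarith
  have h9 : y.2 = b := by have := abs_eq_zero.1 h7.2; linarith
  exact Prod.ext h8 h9
end

section
/- Under the hypotheses of the fixed-point statement (t < T_c), the map φ_t(x,y) = ((1+t)x − t∂g₀/∂y(x,y), (1+t)y − t∂g₀/∂x(x,y)) restricted to K_t = φ_t⁻¹([0,1]²) is a bijection onto [0,1]², and its inverse h_t : [0,1]² → K_t is continuous. -/
open Set

theorem aux_fderiv_apply (g : ℝ × ℝ → ℝ) (hg : ContDiff ℝ 2 g) (w : ℝ × ℝ) (p v : ℝ × ℝ) :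
    fderiv ℝ (fun q => fderiv ℝ g q w) p v = fderiv ℝ (fderiv ℝ g) p v w := by
  have h1 : HasFDerivAt (fderiv ℝ g) (fderiv ℝ (fderiv ℝ g) p) p :=
    ((hg.fderiv_right (by norm_num : (1:WithTop ℕ∞) + 1 ≤ 2)).differentiable one_ne_zero p).hasFDerivAt
  have h2 := (ContinuousLinearMap.apply ℝ ℝ w).hasFDerivAt.comp p h1
  exact congrFun (congrArg _ h2.fderiv) v

theorem aux_contdiff (g : ℝ × ℝ → ℝ) (hg : ContDiff ℝ 2 g) (w : ℝ × ℝ) :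
    ContDiff ℝ 1 (fun p => fderiv ℝ g p w) :=
  (hg.fderiv_right (by norm_num : (1:WithTop ℕ∞) + 1 ≤ 2)).clm_apply contDiff_const

/-- anisotropic Lipschitz bound via MVT along a segment inside the unit square -/
theorem aux_lip (g : ℝ × ℝ → ℝ) (hg : ContDiff ℝ 2 g) (w : ℝ × ℝ) (A B : ℝ)
    (hA : ∀ p ∈ Set.Icc ((0:ℝ), (0:ℝ)) (1, 1),
      fderiv ℝ (fun q => fderiv ℝ g q w) p (1, 0) ∈ Set.Icc (0:ℝ) A)
    (hB : ∀ p ∈ Set.Icc ((0:ℝ), (0:ℝ)) (1, 1),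
      fderiv ℝ (fun q => fderiv ℝ g q w) p (0, 1) ∈ Set.Icc (0:ℝ) B)
    (p q : ℝ × ℝ) (hp : p ∈ Set.Icc ((0:ℝ), (0:ℝ)) (1, 1))
    (hq : q ∈ Set.Icc ((0:ℝ), (0:ℝ)) (1, 1)) :
    |fderiv ℝ g q w - fderiv ℝ g p w| ≤ A * |q.1 - p.1| + B * |q.2 - p.2| := by
  set Q : Set (ℝ × ℝ) := Set.Icc ((0:ℝ), (0:ℝ)) (1, 1) with hQ
  set G : ℝ × ℝ → ℝ := fun r => fderiv ℝ g r w with hGdef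
  have hGdiff : Differentiable ℝ G := (aux_contdiff g hg w).differentiable one_ne_zero
  set ℓ : ℝ → ℝ × ℝ := fun s => p + s • (q - p) with hl
  have hseg : ∀ s ∈ Icc (0:ℝ) 1, ℓ s ∈ Q := by
    intro s hs
    have := (convex_Icc ((0:ℝ), (0:ℝ)) (1, 1)) hp hq (by linarith [hs.1, hs.2] : 0 ≤ 1 - s)
      hs.1 (by ring)
    convert this using 1
    simp only [hl]
    module
  have hderiv : ∀ s ∈ Icc (0:ℝ) 1,
      HasDerivWithinAt (fun s => G (ℓ s)) (fderiv ℝ G (ℓ s) (q - p)) (Icc 0 1) s := by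
    intro s hs
    have hℓ : HasDerivAt ℓ (q - p) s := by
      have h1 : HasDerivAt (fun s : ℝ => s • (q - p)) ((1:ℝ) • (q - p)) s :=
        (hasDerivAt_id s).smul_const (q - p)
      have h2 := h1.const_add p
      rw [one_smul] at h2
      exact h2
    exact ((hGdiff (ℓ s)).hasFDerivAt.comp_hasDerivAt s hℓ).hasDerivWithinAt
  have hbound : ∀ s ∈ Ico (0:ℝ) 1,
      ‖fderiv ℝ G (ℓ s) (q - p)‖ ≤ A * |q.1 - p.1| + B * |q.2 - p.2| := by
    intro s hs
    have hmem : ℓ s ∈ Q := hseg s ⟨hs.1, hs.2.le⟩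
    have hsplit : (q - p) = (q.1 - p.1) • ((1:ℝ), (0:ℝ)) + (q.2 - p.2) • ((0:ℝ), (1:ℝ)) := by
      ext <;> simp
    rw [hsplit, map_add, map_smul, map_smul]
    have h1 := hA (ℓ s) hmem
    have h2 := hB (ℓ s) hmem
    have e1 : |fderiv ℝ G (ℓ s) (1, 0)| ≤ A := abs_le.2 ⟨by linarith [h1.1, h1.2], h1.2⟩
    have e2 : |fderiv ℝ G (ℓ s) (0, 1)| ≤ B := abs_le.2 ⟨by linarith [h2.1, h2.2], h2.2⟩
    simp only [smul_eq_mul, Real.norm_eq_abs]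
    calc |(q.1 - p.1) * fderiv ℝ G (ℓ s) (1, 0) + (q.2 - p.2) * fderiv ℝ G (ℓ s) (0, 1)|
        ≤ |(q.1 - p.1) * fderiv ℝ G (ℓ s) (1, 0)| + |(q.2 - p.2) * fderiv ℝ G (ℓ s) (0, 1)| :=
          abs_add_le _ _
      _ ≤ A * |q.1 - p.1| + B * |q.2 - p.2| := by
          rw [abs_mul, abs_mul]
          have := abs_nonneg (q.1 - p.1)
          have := abs_nonneg (q.2 - p.2)
          nlinarith [mul_le_mul_of_nonneg_left e1 (abs_nonneg (q.1 - p.1)),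
            mul_le_mul_of_nonneg_left e2 (abs_nonneg (q.2 - p.2))]
  have := norm_image_sub_le_of_norm_deriv_le_segment' hderiv hbound 1 (by norm_num)
  simp only [hl] at this
  have e0 : p + (0:ℝ) • (q - p) = p := by module
  have e1 : p + (1:ℝ) • (q - p) = q := by module
  rw [e0, e1] at this
  simpa [Real.norm_eq_abs] using this

/-- the unit square membership, unfolded -/
theorem aux_memQ (p : ℝ × ℝ) :
    p ∈ Set.Icc ((0:ℝ), (0:ℝ)) (1, 1) ↔ 0 ≤ p.1 ∧ 0 ≤ p.2 ∧ p.1 ≤ 1 ∧ p.2 ≤ 1 := by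
  simp [Set.mem_Icc, Prod.le_def]; tauto

/-- weighted distance on the plane -/
def wd (mu lam : ℝ) (p q : ℝ × ℝ) : ℝ := mu * |p.1 - q.1| + lam * |p.2 - q.2|

theorem wd_nonneg {mu lam : ℝ} (hmu : 0 ≤ mu) (hlam : 0 ≤ lam) (p q : ℝ × ℝ) :
    0 ≤ wd mu lam p q :=
  add_nonneg (mul_nonneg hmu (abs_nonneg _)) (mul_nonneg hlam (abs_nonneg _))

theorem wd_tri (mu lam : ℝ) (hmu : 0 ≤ mu) (hlam : 0 ≤ lam) (a b c : ℝ × ℝ) :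
    wd mu lam a c ≤ wd mu lam a b + wd mu lam b c := by
  unfold wd
  have h1 := abs_sub_le a.1 b.1 c.1
  have h2 := abs_sub_le a.2 b.2 c.2
  nlinarith [mul_le_mul_of_nonneg_left h1 hmu, mul_le_mul_of_nonneg_left h2 hlam]

theorem wd_symm (mu lam : ℝ) (p q : ℝ × ℝ) : wd mu lam p q = wd mu lam q p := by
  unfold wd; rw [abs_sub_comm, abs_sub_comm q.2]

theorem dist_le_wd {mu lam : ℝ} (hmu : 0 < mu) (hlam : 0 < lam) (p q : ℝ × ℝ) :
    dist p q ≤ wd mu lam p q / min lam mu := by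
  have hmin : 0 < min lam mu := lt_min hlam hmu
  rw [Prod.dist_eq, Real.dist_eq, Real.dist_eq]
  unfold wd
  apply max_le <;> rw [le_div_iff₀ hmin]
  · nlinarith [abs_nonneg (p.2 - q.2), min_le_right lam mu, min_le_left lam mu,
      abs_nonneg (p.1 - q.1)]
  · nlinarith [abs_nonneg (p.2 - q.2), min_le_right lam mu, min_le_left lam mu,
      abs_nonneg (p.1 - q.1)]

/-- Banach fixed point, specialized to a contraction in the weighted distance
on a closed subset of the plane. -/
theorem aux_banach (F : ℝ × ℝ → ℝ × ℝ) (hFc : Continuous F) (Q : Set (ℝ × ℝ))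
    (hQc : IsClosed Q) (x0 : ℝ × ℝ) (hx0 : x0 ∈ Q) (hmaps : ∀ p ∈ Q, F p ∈ Q)
    (mu lam k : ℝ) (hmu : 0 < mu) (hlam : 0 < lam) (hk0 : 0 ≤ k) (hk1 : k < 1)
    (hcontr : ∀ p ∈ Q, ∀ q ∈ Q, wd mu lam (F p) (F q) ≤ k * wd mu lam p q) :
    ∃ p, p ∈ Q ∧ F p = p := by
  set u : ℕ → ℝ × ℝ := fun n => F^[n] x0 with hu
  have husucc : ∀ n, u (n + 1) = F (u n) := fun n => Function.iterate_succ_apply' F n _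
  have huQ : ∀ n, u n ∈ Q := by
    intro n
    induction n with
    | zero => exact hx0
    | succ m ih => rw [husucc]; exact hmaps _ ih
  have hdgeom : ∀ n, wd mu lam (u (n + 1)) (u n) ≤ k ^ n * wd mu lam (u 1) (u 0) := by
    intro n
    induction n with
    | zero => simp
    | succ m ih =>
      calc wd mu lam (u (m + 2)) (u (m + 1)) = wd mu lam (F (u (m + 1))) (F (u m)) := by
            rw [husucc (m + 1), husucc m]
        _ ≤ k * wd mu lam (u (m + 1)) (u m) := hcontr _ (huQ _) _ (huQ _)
        _ ≤ k * (k ^ m * wd mu lam (u 1) (u 0)) := mul_le_mul_of_nonneg_left ih hk0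
        _ = k ^ (m + 1) * wd mu lam (u 1) (u 0) := by ring
  have hmin : 0 < min lam mu := lt_min hlam hmu
  have hcauchy : CauchySeq u := by
    apply cauchySeq_of_le_geometric k (wd mu lam (u 1) (u 0) / min lam mu) hk1
    intro n
    calc dist (u n) (u (n + 1)) = dist (u (n + 1)) (u n) := dist_comm _ _
      _ ≤ wd mu lam (u (n + 1)) (u n) / min lam mu := dist_le_wd hmu hlam _ _
      _ ≤ (k ^ n * wd mu lam (u 1) (u 0)) / min lam mu := by
          apply div_le_div_of_nonneg_right (hdgeom n) hmin.le
      _ = wd mu lam (u 1) (u 0) / min lam mu * k ^ n := by ring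
  obtain ⟨p, hp⟩ := cauchySeq_tendsto_of_complete hcauchy
  have hpQ : p ∈ Q := hQc.mem_of_tendsto hp (Filter.Eventually.of_forall huQ)
  have h1 : Filter.Tendsto (fun n => u (n + 1)) Filter.atTop (nhds p) :=
    hp.comp (Filter.tendsto_add_atTop_nat 1)
  have h2 : Filter.Tendsto (fun n => F (u n)) Filter.atTop (nhds (F p)) :=
    (hFc.tendsto p).comp hp
  have : F p = p := tendsto_nhds_unique (by simpa [← husucc] using h2) h1
  exact ⟨p, hpQ, this⟩

/-- the fixed-point map -/
noncomputable def Fmap (g₀ : ℝ × ℝ → ℝ) (t : ℝ) (w p : ℝ × ℝ) : ℝ × ℝ :=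
  ((w.1 + t * fderiv ℝ g₀ p (0, 1)) / (1 + t), (w.2 + t * fderiv ℝ g₀ p (1, 0)) / (1 + t))

set_option maxHeartbeats 1000000 in
/-- for t < T_c, the map
φ_t(x,y) = ((1+t)x − t·∂g₀/∂y(x,y), (1+t)y − t·∂g₀/∂x(x,y)),
restricted to K_t = φ_t⁻¹([0,1]²) (inside [0,1]²), is a bijection onto [0,1]²
with continuous inverse h_t : [0,1]² → K_t. -/
theorem phi_homeomorphism (g₀ : ℝ × ℝ → ℝ) (hg : ContDiff ℝ 2 g₀)
    (t α β γ : ℝ) (ht : 0 ≤ t)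
    (hx01 : ∀ p ∈ Set.Icc ((0:ℝ), (0:ℝ)) (1, 1), fderiv ℝ g₀ p (1, 0) ∈ Set.Icc (0:ℝ) 1)
    (hy01 : ∀ p ∈ Set.Icc ((0:ℝ), (0:ℝ)) (1, 1), fderiv ℝ g₀ p (0, 1) ∈ Set.Icc (0:ℝ) 1)
    (hα : ∀ p ∈ Set.Icc ((0:ℝ), (0:ℝ)) (1, 1),
      fderiv ℝ (fun q => fderiv ℝ g₀ q (1, 0)) p (0, 1) ∈ Set.Icc (0:ℝ) α)
    (hβ : ∀ p ∈ Set.Icc ((0:ℝ), (0:ℝ)) (1, 1),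
      fderiv ℝ (fun q => fderiv ℝ g₀ q (0, 1)) p (0, 1) ∈ Set.Icc (0:ℝ) β)
    (hγ : ∀ p ∈ Set.Icc ((0:ℝ), (0:ℝ)) (1, 1),
      fderiv ℝ (fun q => fderiv ℝ g₀ q (1, 0)) p (1, 0) ∈ Set.Icc (0:ℝ) γ)
    (hcrit : t * (α + Real.sqrt (β * γ)) / (1 + t) < 1)
    (φ : ℝ × ℝ → ℝ × ℝ)
    (hφ : ∀ z : ℝ × ℝ, φ z =
      ((1 + t) * z.1 - t * fderiv ℝ g₀ z (0, 1), (1 + t) * z.2 - t * fderiv ℝ g₀ z (1, 0)))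
    (K : Set (ℝ × ℝ))
    (hK : K = Set.Icc ((0:ℝ), (0:ℝ)) (1, 1) ∩ φ ⁻¹' Set.Icc ((0:ℝ), (0:ℝ)) (1, 1)) :
    Set.BijOn φ K (Set.Icc ((0:ℝ), (0:ℝ)) (1, 1)) ∧
    ∃ h : ℝ × ℝ → ℝ × ℝ, ContinuousOn h (Set.Icc ((0:ℝ), (0:ℝ)) (1, 1)) ∧
      ∀ w ∈ Set.Icc ((0:ℝ), (0:ℝ)) (1, 1), h w ∈ K ∧ φ (h w) = w := by
  have one_t : (0:ℝ) < 1 + t := by linarith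
  have hne : (1:ℝ) + t ≠ 0 := ne_of_gt one_t
  have h00 : ((0:ℝ), (0:ℝ)) ∈ Set.Icc ((0:ℝ), (0:ℝ)) (1, 1) := by
    rw [aux_memQ]; norm_num
  have hα0 : 0 ≤ α := le_trans (hα _ h00).1 (hα _ h00).2
  have hβ0 : 0 ≤ β := le_trans (hβ _ h00).1 (hβ _ h00).2
  have hγ0 : 0 ≤ γ := le_trans (hγ _ h00).1 (hγ _ h00).2
  have hsym : ∀ p : ℝ × ℝ,
      fderiv ℝ (fun q => fderiv ℝ g₀ q (0, 1)) p (1, 0)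
        = fderiv ℝ (fun q => fderiv ℝ g₀ q (1, 0)) p (0, 1) := by
    intro p
    rw [aux_fderiv_apply g₀ hg _ p _, aux_fderiv_apply g₀ hg _ p _]
    exact hg.contDiffAt.isSymmSndFDerivAt (by norm_num) _ _
  have lip1 : ∀ p ∈ Set.Icc ((0:ℝ), (0:ℝ)) (1, 1), ∀ q ∈ Set.Icc ((0:ℝ), (0:ℝ)) (1, 1),
      |fderiv ℝ g₀ q (0, 1) - fderiv ℝ g₀ p (0, 1)| ≤ α * |q.1 - p.1| + β * |q.2 - p.2| :=
    fun p hp q hq => aux_lip g₀ hg (0, 1) α β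
      (fun r hr => by rw [hsym r]; exact hα r hr) hβ p q hp hq
  have lip2 : ∀ p ∈ Set.Icc ((0:ℝ), (0:ℝ)) (1, 1), ∀ q ∈ Set.Icc ((0:ℝ), (0:ℝ)) (1, 1),
      |fderiv ℝ g₀ q (1, 0) - fderiv ℝ g₀ p (1, 0)| ≤ γ * |q.1 - p.1| + α * |q.2 - p.2| :=
    fun p hp q hq => aux_lip g₀ hg (1, 0) γ α hγ hα p q hp hq
  -- choose δ > 0 keeping the contraction constant below 1
  obtain ⟨δ, δpos, hkδ⟩ :
      ∃ δ : ℝ, 0 < δ ∧ t * (α + Real.sqrt ((β + δ) * (γ + δ))) / (1 + t) < 1 := by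
    have hsq : Continuous fun δ : ℝ => Real.sqrt ((β + δ) * (γ + δ)) :=
      Real.continuous_sqrt.comp
        ((continuous_const.add continuous_id).mul (continuous_const.add continuous_id))
    have hcont : Continuous fun δ : ℝ => t * (α + Real.sqrt ((β + δ) * (γ + δ))) / (1 + t) :=
      (continuous_const.mul (continuous_const.add hsq)).div_const _
    have hc : Filter.Tendsto (fun δ : ℝ => t * (α + Real.sqrt ((β + δ) * (γ + δ))) / (1 + t))
        (nhds 0) (nhds (t * (α + Real.sqrt (β * γ)) / (1 + t))) := by
      have h0 : (fun δ : ℝ => t * (α + Real.sqrt ((β + δ) * (γ + δ))) / (1 + t)) 0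
          = t * (α + Real.sqrt (β * γ)) / (1 + t) := by norm_num
      exact h0 ▸ hcont.continuousAt (x := (0:ℝ))
    have hev := hc.eventually_lt_const hcrit
    have hev2 : ∀ᶠ δ in nhdsWithin (0:ℝ) (Set.Ioi 0),
        t * (α + Real.sqrt ((β + δ) * (γ + δ))) / (1 + t) < 1 ∧ δ ∈ Set.Ioi (0:ℝ) :=
      (hev.filter_mono nhdsWithin_le_nhds).and self_mem_nhdsWithin
    obtain ⟨δ, h1, h2⟩ := hev2.exists
    exact ⟨δ, h2, h1⟩
  set lam : ℝ := Real.sqrt (β + δ) with hlam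
  set mu : ℝ := Real.sqrt (γ + δ) with hmu
  have lampos : 0 < lam := Real.sqrt_pos.2 (by linarith)
  have mupos : 0 < mu := Real.sqrt_pos.2 (by linarith)
  have lamsq : lam ^ 2 = β + δ := Real.sq_sqrt (by linarith)
  have musq : mu ^ 2 = γ + δ := Real.sq_sqrt (by linarith)
  set k : ℝ := t * (α + lam * mu) / (1 + t) with hk
  have hk1 : k < 1 := by
    have : lam * mu = Real.sqrt ((β + δ) * (γ + δ)) := (Real.sqrt_mul (by linarith) _).symm
    rw [hk, this]; exact hkδ
  have hk0 : 0 ≤ k := by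
    exact div_nonneg (mul_nonneg ht (add_nonneg hα0 (mul_nonneg lampos.le mupos.le))) one_t.le
  -- fixed points of `Fmap g₀ t w` are solutions of `φ p = w`
  have hfix_iff : ∀ (w p : ℝ × ℝ), Fmap g₀ t w p = p ↔ φ p = w := by
    intro w p
    rw [hφ p, Prod.ext_iff, Prod.ext_iff]
    simp only [Fmap]
    constructor
    · rintro ⟨h1, h2⟩
      field_simp at h1 h2
      constructor <;> linarith
    · rintro ⟨h1, h2⟩
      constructor <;> field_simp <;> linarith
  have hFcont : ∀ w : ℝ × ℝ, Continuous (Fmap g₀ t w) := by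
    intro w
    have c1 : Continuous (fun p : ℝ × ℝ => fderiv ℝ g₀ p ((0:ℝ), (1:ℝ))) :=
      (aux_contdiff g₀ hg _).continuous
    have c2 : Continuous (fun p : ℝ × ℝ => fderiv ℝ g₀ p ((1:ℝ), (0:ℝ))) :=
      (aux_contdiff g₀ hg _).continuous
    exact ((continuous_const.add (continuous_const.mul c1)).div_const _).prodMk
      ((continuous_const.add (continuous_const.mul c2)).div_const _)
  have hmaps : ∀ w ∈ Set.Icc ((0:ℝ), (0:ℝ)) (1, 1), ∀ p ∈ Set.Icc ((0:ℝ), (0:ℝ)) (1, 1),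
      Fmap g₀ t w p ∈ Set.Icc ((0:ℝ), (0:ℝ)) (1, 1) := by
    intro w hw p hp
    rw [aux_memQ] at hw ⊢
    obtain ⟨hw1, hw2, hw3, hw4⟩ := hw
    obtain ⟨hy1, hy2⟩ := hy01 p hp
    obtain ⟨hx1, hx2⟩ := hx01 p hp
    refine ⟨?_, ?_, ?_, ?_⟩ <;> simp only [Fmap]
    · exact div_nonneg (by nlinarith) one_t.le
    · exact div_nonneg (by nlinarith) one_t.le
    · rw [div_le_one one_t]; nlinarith
    · rw [div_le_one one_t]; nlinarith
  -- the contraction estimate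
  have hcontr : ∀ (w : ℝ × ℝ), ∀ p ∈ Set.Icc ((0:ℝ), (0:ℝ)) (1, 1),
      ∀ q ∈ Set.Icc ((0:ℝ), (0:ℝ)) (1, 1),
      wd mu lam (Fmap g₀ t w p) (Fmap g₀ t w q) ≤ k * wd mu lam p q := by
    intro w p hp q hq
    have L1 := lip1 q hq p hp
    have L2 := lip2 q hq p hp
    have c1 : (Fmap g₀ t w p).1 - (Fmap g₀ t w q).1
        = t * (fderiv ℝ g₀ p (0, 1) - fderiv ℝ g₀ q (0, 1)) / (1 + t) := by
      simp only [Fmap]; field_simp; ring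
    have c2 : (Fmap g₀ t w p).2 - (Fmap g₀ t w q).2
        = t * (fderiv ℝ g₀ p (1, 0) - fderiv ℝ g₀ q (1, 0)) / (1 + t) := by
      simp only [Fmap]; field_simp; ring
    have a1 : |(Fmap g₀ t w p).1 - (Fmap g₀ t w q).1|
        = t * |fderiv ℝ g₀ p (0, 1) - fderiv ℝ g₀ q (0, 1)| / (1 + t) := by
      rw [c1, abs_div, abs_mul, abs_of_nonneg ht, abs_of_pos one_t]
    have a2 : |(Fmap g₀ t w p).2 - (Fmap g₀ t w q).2|
        = t * |fderiv ℝ g₀ p (1, 0) - fderiv ℝ g₀ q (1, 0)| / (1 + t) := by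
      rw [c2, abs_div, abs_mul, abs_of_nonneg ht, abs_of_pos one_t]
    have key : mu * |fderiv ℝ g₀ p (0, 1) - fderiv ℝ g₀ q (0, 1)|
          + lam * |fderiv ℝ g₀ p (1, 0) - fderiv ℝ g₀ q (1, 0)|
        ≤ (α + lam * mu) * (mu * |p.1 - q.1| + lam * |p.2 - q.2|) := by
      have h1 : mu * |fderiv ℝ g₀ p (0, 1) - fderiv ℝ g₀ q (0, 1)|
          ≤ mu * (α * |p.1 - q.1| + β * |p.2 - q.2|) := mul_le_mul_of_nonneg_left L1 mupos.le
      have h2 : lam * |fderiv ℝ g₀ p (1, 0) - fderiv ℝ g₀ q (1, 0)|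
          ≤ lam * (γ * |p.1 - q.1| + α * |p.2 - q.2|) := mul_le_mul_of_nonneg_left L2 lampos.le
      have h3 : (lam * γ) * |p.1 - q.1| ≤ (lam * mu ^ 2) * |p.1 - q.1| := by
        apply mul_le_mul_of_nonneg_right _ (abs_nonneg _)
        rw [musq, mul_add]
        linarith only [mul_nonneg lampos.le δpos.le]
      have h4 : (mu * β) * |p.2 - q.2| ≤ (mu * lam ^ 2) * |p.2 - q.2| := by
        apply mul_le_mul_of_nonneg_right _ (abs_nonneg _)
        rw [lamsq, mul_add]
        linarith only [mul_nonneg mupos.le δpos.le]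
      have expand : (α + lam * mu) * (mu * |p.1 - q.1| + lam * |p.2 - q.2|)
          = mu * (α * |p.1 - q.1|) + lam * (α * |p.2 - q.2|)
            + (lam * mu ^ 2) * |p.1 - q.1| + (mu * lam ^ 2) * |p.2 - q.2| := by ring
      rw [expand]
      have e1 : mu * (α * |p.1 - q.1| + β * |p.2 - q.2|)
          = mu * (α * |p.1 - q.1|) + (mu * β) * |p.2 - q.2| := by ring
      have e2 : lam * (γ * |p.1 - q.1| + α * |p.2 - q.2|)
          = (lam * γ) * |p.1 - q.1| + lam * (α * |p.2 - q.2|) := by ring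
      rw [e1] at h1; rw [e2] at h2
      linarith only [h1, h2, h3, h4]
    calc wd mu lam (Fmap g₀ t w p) (Fmap g₀ t w q)
        = (t * (mu * |fderiv ℝ g₀ p (0, 1) - fderiv ℝ g₀ q (0, 1)|
            + lam * |fderiv ℝ g₀ p (1, 0) - fderiv ℝ g₀ q (1, 0)|)) / (1 + t) := by
          unfold wd; rw [a1, a2]; ring
      _ ≤ (t * ((α + lam * mu) * (mu * |p.1 - q.1| + lam * |p.2 - q.2|))) / (1 + t) :=
          div_le_div_of_nonneg_right (mul_le_mul_of_nonneg_left key ht) one_t.le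
      _ = k * wd mu lam p q := by rw [hk]; unfold wd; ring
  -- solvability of φ p = w in the square
  have hsolve : ∀ w ∈ Set.Icc ((0:ℝ), (0:ℝ)) (1, 1),
      ∃ p, p ∈ Set.Icc ((0:ℝ), (0:ℝ)) (1, 1) ∧ φ p = w := by
    intro w hw
    obtain ⟨p, hpQ, hpfix⟩ := aux_banach (Fmap g₀ t w) (hFcont w) _ isClosed_Icc
      ((0:ℝ), (0:ℝ)) h00 (fun p hp => hmaps w hw p hp) mu lam k mupos lampos hk0 hk1
      (fun p hp q hq => hcontr w p hp q hq)
    exact ⟨p, hpQ, (hfix_iff w p).1 hpfix⟩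
  -- uniqueness
  have huniq : ∀ (w : ℝ × ℝ), ∀ p ∈ Set.Icc ((0:ℝ), (0:ℝ)) (1, 1),
      ∀ q ∈ Set.Icc ((0:ℝ), (0:ℝ)) (1, 1), φ p = w → φ q = w → p = q := by
    intro w p hp q hq hfp hfq
    have e1 : Fmap g₀ t w p = p := (hfix_iff w p).2 hfp
    have e2 : Fmap g₀ t w q = q := (hfix_iff w q).2 hfq
    have h := hcontr w p hp q hq
    rw [e1, e2] at h
    have hd := wd_nonneg mupos.le lampos.le p q
    have hzero : wd mu lam p q = 0 := by nlinarith
    unfold wd at hzero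
    have ha1 := abs_nonneg (p.1 - q.1)
    have ha2 := abs_nonneg (p.2 - q.2)
    have hm1 := mul_nonneg mupos.le ha1
    have hm2 := mul_nonneg lampos.le ha2
    have e1 : mu * |p.1 - q.1| = 0 := by linarith
    have e2 : lam * |p.2 - q.2| = 0 := by linarith
    have f1 : |p.1 - q.1| = 0 := by
      rcases mul_eq_zero.1 e1 with h | h
      · exact absurd h mupos.ne'
      · exact h
    have f2 : |p.2 - q.2| = 0 := by
      rcases mul_eq_zero.1 e2 with h | h
      · exact absurd h lampos.ne'
      · exact h
    have g1 : p.1 = q.1 := sub_eq_zero.1 (abs_eq_zero.1 f1)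
    have g2 : p.2 = q.2 := sub_eq_zero.1 (abs_eq_zero.1 f2)
    exact Prod.ext g1 g2
  -- the bijection
  have hbij : Set.BijOn φ K (Set.Icc ((0:ℝ), (0:ℝ)) (1, 1)) := by
    refine ⟨?_, ?_, ?_⟩
    · intro p hp
      rw [hK] at hp
      exact hp.2
    · intro p hp q hq heq
      rw [hK] at hp hq
      exact huniq (φ p) p hp.1 q hq.1 rfl heq.symm
    · intro w hw
      obtain ⟨p, hpQ, hpφ⟩ := hsolve w hw
      refine ⟨p, ?_, hpφ⟩
      rw [hK]
      exact ⟨hpQ, by simp only [Set.mem_preimage, hpφ]; exact hw⟩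
  classical
  set h : ℝ × ℝ → ℝ × ℝ := fun w =>
    if hw : w ∈ Set.Icc ((0:ℝ), (0:ℝ)) (1, 1) then (hsolve w hw).choose else w with hh
  have hprop : ∀ w ∈ Set.Icc ((0:ℝ), (0:ℝ)) (1, 1),
      h w ∈ Set.Icc ((0:ℝ), (0:ℝ)) (1, 1) ∧ φ (h w) = w := by
    intro w hw
    rw [hh]
    simp only [dif_pos hw]
    exact (hsolve w hw).choose_spec
  have hminpos : 0 < min lam mu := lt_min lampos mupos
  have h1k : 0 < 1 - k := by linarith
  set L : ℝ := (mu + lam) / ((1 + t) * (1 - k) * min lam mu) with hL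
  have hLip : ∀ w ∈ Set.Icc ((0:ℝ), (0:ℝ)) (1, 1), ∀ w' ∈ Set.Icc ((0:ℝ), (0:ℝ)) (1, 1),
      dist (h w) (h w') ≤ L * dist w w' := by
    intro w hw w' hw'
    obtain ⟨hQ1, hφ1⟩ := hprop w hw
    obtain ⟨hQ2, hφ2⟩ := hprop w' hw'
    have e1 : Fmap g₀ t w (h w) = h w := (hfix_iff w (h w)).2 hφ1
    have e2 : Fmap g₀ t w' (h w') = h w' := (hfix_iff w' (h w')).2 hφ2
    have d1 : |w.1 - w'.1| ≤ dist w w' := by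
      rw [Prod.dist_eq, Real.dist_eq, Real.dist_eq]; exact le_max_left _ _
    have d2 : |w.2 - w'.2| ≤ dist w w' := by
      rw [Prod.dist_eq, Real.dist_eq, Real.dist_eq]; exact le_max_right _ _
    have step : wd mu lam (Fmap g₀ t w (h w')) (Fmap g₀ t w' (h w'))
        ≤ (mu + lam) / (1 + t) * dist w w' := by
      have c1 : (Fmap g₀ t w (h w')).1 - (Fmap g₀ t w' (h w')).1 = (w.1 - w'.1) / (1 + t) := by
        simp only [Fmap]; ring
      have c2 : (Fmap g₀ t w (h w')).2 - (Fmap g₀ t w' (h w')).2 = (w.2 - w'.2) / (1 + t) := by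
        simp only [Fmap]; ring
      have hX : mu * |w.1 - w'.1| + lam * |w.2 - w'.2| ≤ (mu + lam) * dist w w' := by
        nlinarith [mul_le_mul_of_nonneg_left d1 mupos.le, mul_le_mul_of_nonneg_left d2 lampos.le]
      calc wd mu lam (Fmap g₀ t w (h w')) (Fmap g₀ t w' (h w'))
          = (mu * |w.1 - w'.1| + lam * |w.2 - w'.2|) / (1 + t) := by
            unfold wd
            rw [c1, c2, abs_div, abs_div, abs_of_pos one_t]
            ring
        _ ≤ ((mu + lam) * dist w w') / (1 + t) :=
            div_le_div_of_nonneg_right hX one_t.le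
        _ = (mu + lam) / (1 + t) * dist w w' := by ring
    have tri := wd_tri mu lam mupos.le lampos.le
      (Fmap g₀ t w (h w)) (Fmap g₀ t w (h w')) (Fmap g₀ t w' (h w'))
    have contr := hcontr w (h w) hQ1 (h w') hQ2
    have comb : wd mu lam (h w) (h w')
        ≤ k * wd mu lam (h w) (h w') + (mu + lam) / (1 + t) * dist w w' := by
      calc wd mu lam (h w) (h w')
          = wd mu lam (Fmap g₀ t w (h w)) (Fmap g₀ t w' (h w')) := by rw [e1, e2]
        _ ≤ wd mu lam (Fmap g₀ t w (h w)) (Fmap g₀ t w (h w'))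
            + wd mu lam (Fmap g₀ t w (h w')) (Fmap g₀ t w' (h w')) := tri
        _ ≤ k * wd mu lam (h w) (h w') + (mu + lam) / (1 + t) * dist w w' :=
            add_le_add contr step
    have step2 : wd mu lam (h w) (h w') ≤ ((mu + lam) / (1 + t) * dist w w') / (1 - k) := by
      rw [le_div_iff₀ h1k]
      linarith only [comb]
    calc dist (h w) (h w') ≤ wd mu lam (h w) (h w') / min lam mu :=
          dist_le_wd mupos lampos _ _
      _ ≤ (((mu + lam) / (1 + t) * dist w w') / (1 - k)) / min lam mu :=
          div_le_div_of_nonneg_right step2 hminpos.le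
      _ = L * dist w w' := by
          rw [hL]
          field_simp
  refine ⟨hbij, h, ?_, ?_⟩
  · -- continuity
    have hL0 : 0 ≤ L := by
      rw [hL]
      apply div_nonneg (by linarith) (le_of_lt (by positivity))
    apply LipschitzOnWith.continuousOn (K := Real.toNNReal L)
    apply LipschitzOnWith.of_dist_le_mul
    intro x hx y hy
    refine le_trans (hLip x hx y hy) ?_
    apply mul_le_mul_of_nonneg_right _ dist_nonneg
    rw [Real.coe_toNNReal']
    exact le_max_left _ _
  · intro w hw
    obtain ⟨hQm, hφm⟩ := hprop w hw
    refine ⟨?_, hφm⟩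
    rw [hK]
    exact ⟨hQm, by simp only [Set.mem_preimage, hφm]; exact hw⟩
end

section
/- Let g : [0,T)×(0,1)² → ℝ be a regular solution of the PDE ∂g_t/∂t = (∂g_t/∂x)(∂g_t/∂y) − (1/(1+t))(x ∂g_t/∂x + y ∂g_t/∂y), and suppose along a characteristic (x(t),y(t)) one has ∂g_t/∂x(x(t),y(t)) = p₁(0)/(1+t) and ∂g_t/∂y(x(t),y(t)) = p₂(0)/(1+t), with x'(t) = x(t)/(1+t) − p₂(0)/(1+t) and y'(t) = y(t)/(1+t) − p₁(0)/(1+t). Then g_t(x(t),y(t)) = g₀(x(0),y(0)) − (t/(1+t))·p₁(0)p₂(0). -/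
/-- along a characteristic of the PDE
∂g/∂t = (∂g/∂x)(∂g/∂y) − (1/(1+t))(x ∂g/∂x + y ∂g/∂y),
on which ∂g/∂x = p₁/(1+t), ∂g/∂y = p₂/(1+t), x' = x/(1+t) − p₂/(1+t),
y' = y/(1+t) − p₁/(1+t), the solution satisfies
g_t(x(t),y(t)) = g₀(x(0),y(0)) − (t/(1+t))·p₁p₂. -/
theorem along_characteristics (T : ℝ) (g : ℝ → ℝ × ℝ → ℝ) (gt : ℝ → ℝ × ℝ → ℝ)
    (x y : ℝ → ℝ) (p₁ p₂ : ℝ)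
    (hreg : ContDiff ℝ 1 (fun q : ℝ × ℝ × ℝ => g q.1 q.2))
    (hreg2 : ∀ t ∈ Set.Ico (0:ℝ) T, ContDiff ℝ 2 (g t))
    (hgt : ∀ t ∈ Set.Ico (0:ℝ) T, ∀ q : ℝ × ℝ, HasDerivAt (fun s => g s q) (gt t q) t)
    (hPDE : ∀ t ∈ Set.Ico (0:ℝ) T, ∀ q : ℝ × ℝ,
      gt t q = fderiv ℝ (g t) q (1, 0) * fderiv ℝ (g t) q (0, 1)
        - (1 / (1 + t)) * (q.1 * fderiv ℝ (g t) q (1, 0) + q.2 * fderiv ℝ (g t) q (0, 1)))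
    (hx : ∀ t ∈ Set.Ico (0:ℝ) T, HasDerivAt x (x t / (1 + t) - p₂ / (1 + t)) t)
    (hy : ∀ t ∈ Set.Ico (0:ℝ) T, HasDerivAt y (y t / (1 + t) - p₁ / (1 + t)) t)
    (hchar1 : ∀ t ∈ Set.Ico (0:ℝ) T, fderiv ℝ (g t) (x t, y t) (1, 0) = p₁ / (1 + t))
    (hchar2 : ∀ t ∈ Set.Ico (0:ℝ) T, fderiv ℝ (g t) (x t, y t) (0, 1) = p₂ / (1 + t)) :
    ∀ t ∈ Set.Ico (0:ℝ) T,
      g t (x t, y t) = g 0 (x 0, y 0) - (t / (1 + t)) * (p₁ * p₂) := by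
  set G : ℝ × ℝ × ℝ → ℝ := fun q => g q.1 q.2 with hGdef
  -- derivative of F(t) = g t (x t, y t)
  have key : ∀ t ∈ Set.Ico (0:ℝ) T,
      HasDerivAt (fun s => g s (x s, y s)) (-(p₁ * p₂) / (1 + t) ^ 2) t := by
    intro t ht
    have h1t : (0:ℝ) < 1 + t := by linarith [ht.1]
    have h1t' : (1 + t) ≠ 0 := ne_of_gt h1t
    set p : ℝ × ℝ × ℝ := (t, x t, y t) with hp
    have hG : HasFDerivAt G (fderiv ℝ G p) p :=
      ((hreg.differentiable one_ne_zero) p).hasFDerivAt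
    -- partial derivative in t equals gt
    have e1 : fderiv ℝ G p ((1:ℝ), ((0:ℝ), (0:ℝ))) = gt t (x t, y t) := by
      have hc : HasDerivAt (fun s : ℝ => ((s, (x t, y t)) : ℝ × ℝ × ℝ))
          ((1:ℝ), ((0:ℝ), (0:ℝ))) t := HasDerivAt.prodMk (hasDerivAt_id t) (hasDerivAt_const t _)
      have := hG.comp_hasDerivAt t hc
      exact this.unique (hgt t ht (x t, y t))
    -- partial derivatives in space
    have e2 : ∀ v : ℝ × ℝ, fderiv ℝ (g t) (x t, y t) v = fderiv ℝ G p ((0:ℝ), v) := by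
      intro v
      have hι : HasFDerivAt (fun q : ℝ × ℝ => ((t, q) : ℝ × ℝ × ℝ))
          (ContinuousLinearMap.inr ℝ ℝ (ℝ × ℝ)) (x t, y t) :=
        HasFDerivAt.prodMk (hasFDerivAt_const t _) (hasFDerivAt_id _)
      have h2 : HasFDerivAt (g t)
          ((fderiv ℝ G p).comp (ContinuousLinearMap.inr ℝ ℝ (ℝ × ℝ))) (x t, y t) :=
        hG.comp (x t, y t) hι
      rw [h2.fderiv]
      rfl
    -- the curve derivative
    have hc : HasDerivAt (fun s : ℝ => ((s, (x s, y s)) : ℝ × ℝ × ℝ))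
        ((1:ℝ), (x t / (1 + t) - p₂ / (1 + t), y t / (1 + t) - p₁ / (1 + t))) t :=
      HasDerivAt.prodMk (hasDerivAt_id t) (HasDerivAt.prodMk (hx t ht) (hy t ht))
    have hF := hG.comp_hasDerivAt t hc
    have hval : fderiv ℝ G p
        ((1:ℝ), (x t / (1 + t) - p₂ / (1 + t), y t / (1 + t) - p₁ / (1 + t)))
        = -(p₁ * p₂) / (1 + t) ^ 2 := by
      have hsplit : ((1:ℝ), ((x t / (1 + t) - p₂ / (1 + t)), (y t / (1 + t) - p₁ / (1 + t))))
          = ((1:ℝ), ((0:ℝ), (0:ℝ)))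
            + (x t / (1 + t) - p₂ / (1 + t)) • ((0:ℝ), ((1:ℝ), (0:ℝ)))
            + (y t / (1 + t) - p₁ / (1 + t)) • ((0:ℝ), ((0:ℝ), (1:ℝ))) := by
        simp [Prod.ext_iff]
      rw [hsplit, map_add, map_add, map_smul, map_smul, e1]
      have ex : fderiv ℝ G p ((0:ℝ), ((1:ℝ), (0:ℝ))) = p₁ / (1 + t) := by
        rw [← e2]; exact hchar1 t ht
      have ey : fderiv ℝ G p ((0:ℝ), ((0:ℝ), (1:ℝ))) = p₂ / (1 + t) := by
        rw [← e2]; exact hchar2 t ht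
      rw [ex, ey, hPDE t ht, hchar1 t ht, hchar2 t ht]
      rw [div_eq_mul_inv (-(p₁ * p₂)), ← inv_pow]
      ring
    rw [hval] at hF
    exact hF
  -- now integrate
  intro t ht
  have h1t : (0:ℝ) < 1 + t := by linarith [ht.1]
  have hsub : Set.Icc (0:ℝ) t ⊆ Set.Ico 0 T := fun s hs => ⟨hs.1, lt_of_le_of_lt hs.2 ht.2⟩
  have hsub' : Set.Ico (0:ℝ) t ⊆ Set.Ico 0 T := fun s hs => ⟨hs.1, lt_trans hs.2 ht.2⟩
  have main := eq_of_has_deriv_right_eq (a := 0) (b := t)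
    (f := fun s => g s (x s, y s)) (f' := fun s => -(p₁ * p₂) / (1 + s) ^ 2)
    (g := fun s => g 0 (x 0, y 0) - (s / (1 + s)) * (p₁ * p₂))
    (fun s hs => ((key s (hsub' hs)).hasDerivWithinAt))
    (fun s hs => by
      have h1s : (0:ℝ) < 1 + s := by linarith [hs.1]
      have : HasDerivAt (fun u : ℝ => g 0 (x 0, y 0) - (u / (1 + u)) * (p₁ * p₂))
          (-(p₁ * p₂) / (1 + s) ^ 2) s := by
        have hd : HasDerivAt (fun u : ℝ => u / (1 + u))
            (((1:ℝ) * (1 + s) - s * (0 + 1)) / (1 + s) ^ 2) s :=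
          (hasDerivAt_id s).div ((hasDerivAt_const s 1).add (hasDerivAt_id s)) (ne_of_gt h1s)
        have := ((hd.mul_const (p₁ * p₂)).const_sub (g 0 (x 0, y 0)))
        rw [show -(p₁ * p₂) / (1 + s) ^ 2 = -((1 * (1 + s) - s * (0 + 1)) / (1 + s) ^ 2 * (p₁ * p₂)) by ring]
        exact this
      exact this.hasDerivWithinAt)
    (fun s hs => ((key s (hsub hs)).continuousAt.continuousWithinAt))
    (ContinuousOn.sub continuousOn_const
      ((continuousOn_id.div (continuousOn_const.add continuousOn_id)
        (fun s hs => by have : (0:ℝ) ≤ s := hs.1; dsimp; intro h; linarith)).mul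
        continuousOn_const))
    (by simp)
  have := main t (Set.right_mem_Icc.mpr ht.1)
  simpa using this
end

section
/- Let α, β, γ ≥ 0 and for t ≥ 0 with (1+t−tα)² ≠ t²βγ, suppose (a,c) ∈ ℝ² solves the linear system [[1+t−tα, −tγ],[−tβ, 1+t−tα]]·(a,c)ᵀ = (1/(1+t))·(γ, α)ᵀ. Then a = γ/((1+t−tα)² − t²γβ). Moreover if M = α + √(βγ) > 1 and T_c = 1/(M−1), then a → +∞ as t → T_c provided γ > 0. -/
open Filter

/-- the solution of the linear system
[[1+t−tα, −tγ],[−tβ, 1+t−tα]]·(a,c)ᵀ = (γ,α)ᵀ/(1+t) has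
a = γ/((1+t−tα)² − t²γβ); and if M = α+√(βγ) > 1 and γ > 0 then
a(t) = γ/D(t) tends to +∞ as t → T_c = 1/(M−1) from within [0,T_c). -/
theorem second_moment_formula (α β γ : ℝ) (hα : 0 ≤ α) (hβ : 0 ≤ β) (hγ : 0 ≤ γ) :
    (∀ t : ℝ, 0 ≤ t → ((1 + t - t * α) ^ 2 - t ^ 2 * γ * β ≠ 0) →
      ∀ a c : ℝ,
        ((1 + t - t * α) * a - t * γ * c = γ / (1 + t) ∧
         -(t * β) * a + (1 + t - t * α) * c = α / (1 + t)) →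
        a = γ / ((1 + t - t * α) ^ 2 - t ^ 2 * γ * β)) ∧
    (1 < α + Real.sqrt (β * γ) → 0 < γ →
      Tendsto (fun t : ℝ => γ / ((1 + t - t * α) ^ 2 - t ^ 2 * γ * β))
        (nhdsWithin (1 / (α + Real.sqrt (β * γ) - 1))
          (Set.Ico 0 (1 / (α + Real.sqrt (β * γ) - 1)))) atTop) := by
  constructor
  · intro t ht hD a c ⟨h1, h2⟩
    have h1t : (0:ℝ) < 1 + t := by linarith
    rw [eq_div_iff hD]
    have key : (((1 + t - t * α) ^ 2 - t ^ 2 * γ * β) * a) * (1 + t)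
        = γ * (1 + t) := by
      field_simp at h1 h2
      linear_combination (1 + t - t * α) * h1 + (t * γ) * h2
    have h3 := mul_right_cancel₀ (ne_of_gt h1t) key
    linear_combination h3
  · intro hM hγ'
    set s := Real.sqrt (β * γ) with hs
    have hs0 : 0 ≤ s := Real.sqrt_nonneg _
    have hss : s ^ 2 = β * γ := Real.sq_sqrt (mul_nonneg hβ hγ)
    have hM1 : 0 < α + s - 1 := by linarith
    set T : ℝ := 1 / (α + s - 1) with hT
    have hT0 : 0 < T := by positivity
    have hDpos : ∀ t ∈ Set.Ico (0:ℝ) T, 0 < (1 + t - t * α) ^ 2 - t ^ 2 * γ * β := by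
      intro t ⟨ht0, htT⟩
      have h1 : 0 < 1 - t * (α + s - 1) := by
        rw [hT, lt_div_iff₀ hM1] at htT
        linarith
      have h2 : 0 < 1 + t - t * α + t * s := by
        nlinarith [mul_nonneg ht0 hs0]
      have heq : (1 + t - t * α) ^ 2 - t ^ 2 * γ * β
          = (1 - t * (α + s - 1)) * (1 + t - t * α + t * s) := by
        linear_combination t ^ 2 * hss
      rw [heq]; positivity
    have hDT : (1 + T - T * α) ^ 2 - T ^ 2 * γ * β = 0 := by
      have hTM : T * (α + s - 1) = 1 := by
        rw [hT]; field_simp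
      have : (1 + T - T * α) ^ 2 - T ^ 2 * γ * β
          = (1 - T * (α + s - 1)) * (1 + T - T * α + T * s) := by
        linear_combination T ^ 2 * hss
      rw [this, hTM]; ring
    have hcont : Tendsto (fun t : ℝ => (1 + t - t * α) ^ 2 - t ^ 2 * γ * β)
        (nhdsWithin T (Set.Ico 0 T)) (nhds 0) := by
      have hc : ContinuousAt (fun t : ℝ => (1 + t - t * α) ^ 2 - t ^ 2 * γ * β) T := by
        fun_prop
      have := (hc.continuousWithinAt (s := Set.Ico 0 T)).tendsto
      rwa [hDT] at this
    have hD0 : Tendsto (fun t : ℝ => (1 + t - t * α) ^ 2 - t ^ 2 * γ * β)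
        (nhdsWithin T (Set.Ico 0 T)) (nhdsWithin 0 (Set.Ioi 0)) := by
      rw [tendsto_nhdsWithin_iff]
      refine ⟨hcont, ?_⟩
      filter_upwards [self_mem_nhdsWithin] with t ht
      exact hDpos t ht
    have hinv := tendsto_inv_nhdsGT_zero.comp hD0
    have final : Tendsto (fun t : ℝ =>
        γ * ((1 + t - t * α) ^ 2 - t ^ 2 * γ * β)⁻¹)
        (nhdsWithin T (Set.Ico 0 T)) atTop :=
      Tendsto.const_mul_atTop hγ' hinv
    simpa [div_eq_mul_inv] using final
end

section
/- Let ν be a probability measure on ℕ and let T be the total progeny of a Galton-Watson process with offspring distribution ν started from two independent ancestors. Then for m ≥ 2, P(T = m) = (2/m)·ν^{*m}(m−2). -/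
open MeasureTheory ProbabilityTheory

/-- Convolution of two sequences on ℕ. -/
def conv (f g : ℕ → ℝ) : ℕ → ℝ := fun n => ∑ k ∈ Finset.range (n + 1), f k * g (n - k)

/-- m-fold convolution power. -/
def convPow (f : ℕ → ℝ) : ℕ → ℕ → ℝ
  | 0 => fun n => if n = 0 then 1 else 0
  | m + 1 => conv f (convPow f m)

namespace TwoAncestorAux

open PowerSeries Finset

variable (ν : ℕ → ℝ)

/-- The generating power series of ν. -/
noncomputable def Fps : PowerSeries ℝ := PowerSeries.mk ν

lemma convPow_eq_coeff : ∀ n r : ℕ, convPow ν n r = PowerSeries.coeff r (Fps ν ^ n) := by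
  intro n
  induction n with
  | zero =>
    intro r
    simp [convPow, PowerSeries.coeff_one]
  | succ n ih =>
    intro r
    rw [pow_succ', PowerSeries.coeff_mul, Finset.Nat.sum_antidiagonal_eq_sum_range_succ_mk]
    show conv ν (convPow ν n) r = _
    unfold conv
    refine Finset.sum_congr rfl fun k _ => ?_
    rw [ih]
    simp [Fps, PowerSeries.coeff_mk]

/-- a k = (1/k) ν^{*k}(k-1), in coefficient form. -/
noncomputable def aa (k : ℕ) : ℝ := (1 / (k : ℝ)) * PowerSeries.coeff (k - 1) (Fps ν ^ k)

/-- the pairing series G = F - X F'. -/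
noncomputable def Gps : PowerSeries ℝ := Fps ν - X * derivativeFun (Fps ν)

lemma dpow : ∀ j : ℕ, derivativeFun (Fps ν ^ (j + 1)) =
    C ((j : ℝ) + 1) * (Fps ν ^ j * derivativeFun (Fps ν)) := by
  intro j
  induction j with
  | zero => simp
  | succ j ih =>
    have : Fps ν ^ (j + 2) = Fps ν * Fps ν ^ (j + 1) := by ring
    rw [this, derivativeFun_mul, ih, smul_eq_mul, smul_eq_mul]
    have hC : C ((((j + 1) : ℕ) : ℝ) + 1) = C ((j : ℝ) + 1) + 1 := by
      have h' : (((j + 1) : ℕ) : ℝ) + 1 = ((j : ℝ) + 1) + 1 := by push_cast; ring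
      rw [h', map_add, map_one]
    rw [hC]
    ring

lemma coeff_G_pow (j : ℕ) : PowerSeries.coeff (j + 1) (Gps ν * Fps ν ^ j) = 0 := by
  have h1 : Gps ν * Fps ν ^ j
      = Fps ν ^ (j + 1) - X * (Fps ν ^ j * derivativeFun (Fps ν)) := by
    unfold Gps; ring
  rw [h1, map_sub]
  have h2 : PowerSeries.coeff (j + 1) (X * (Fps ν ^ j * derivativeFun (Fps ν)))
      = PowerSeries.coeff j (Fps ν ^ j * derivativeFun (Fps ν)) :=
    PowerSeries.coeff_succ_X_mul _ _
  have h3 : ((j : ℝ) + 1) * PowerSeries.coeff j (Fps ν ^ j * derivativeFun (Fps ν))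
      = PowerSeries.coeff (j + 1) (Fps ν ^ (j + 1)) * ((j : ℝ) + 1) := by
    rw [← PowerSeries.coeff_C_mul, ← dpow]; exact coeff_derivative _ _
  have hj : ((j : ℝ) + 1) ≠ 0 := by positivity
  have h4 : PowerSeries.coeff j (Fps ν ^ j * derivativeFun (Fps ν))
      = PowerSeries.coeff (j + 1) (Fps ν ^ (j + 1)) :=
    mul_left_cancel₀ hj (h3.trans (mul_comm _ _))
  rw [h2, h4, sub_self]

lemma pairing (N : ℕ) : PowerSeries.coeff N (Gps ν * Fps ν ^ N) = aa ν (N + 1) := by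
  have h1 : Gps ν * Fps ν ^ N
      = Fps ν ^ (N + 1) - X * (Fps ν ^ N * derivativeFun (Fps ν)) := by
    unfold Gps; ring
  rw [h1, map_sub]
  unfold aa
  match N with
  | 0 =>
    have : PowerSeries.coeff 0 (X * (Fps ν ^ 0 * derivativeFun (Fps ν))) = 0 := by
      rw [PowerSeries.coeff_zero_eq_constantCoeff_apply, map_mul, PowerSeries.constantCoeff_X,
        zero_mul]
    rw [this]
    simp
  | M + 1 =>
    have h2 : PowerSeries.coeff (M + 1) (X * (Fps ν ^ (M + 1) * derivativeFun (Fps ν)))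
        = PowerSeries.coeff M (Fps ν ^ (M + 1) * derivativeFun (Fps ν)) :=
      PowerSeries.coeff_succ_X_mul _ _
    have hd' : derivativeFun (Fps ν ^ (M + 2))
        = C ((M : ℝ) + 1 + 1) * (Fps ν ^ (M + 1) * derivativeFun (Fps ν)) := by
      have hd := dpow ν (M + 1)
      have h' : ((((M + 1)) : ℕ) : ℝ) + 1 = (M : ℝ) + 1 + 1 := by push_cast; ring
      rw [show (M + 2) = (M + 1) + 1 from rfl, hd, h']
    have h3 : ((M : ℝ) + 1 + 1) * PowerSeries.coeff M (Fps ν ^ (M + 1) * derivativeFun (Fps ν))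
        = PowerSeries.coeff (M + 1) (Fps ν ^ (M + 2)) * ((M : ℝ) + 1) := by
      rw [← PowerSeries.coeff_C_mul, ← hd']; exact coeff_derivative _ _
    have hM2 : ((M : ℝ) + 1 + 1) ≠ 0 := by positivity
    have h4 : PowerSeries.coeff M (Fps ν ^ (M + 1) * derivativeFun (Fps ν))
        = PowerSeries.coeff (M + 1) (Fps ν ^ (M + 2)) * ((M : ℝ) + 1) / ((M : ℝ) + 1 + 1) := by
      field_simp
      linarith [h3]
    rw [h2, h4]
    have : (M + 1 + 1 : ℕ) - 1 = M + 1 := rfl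
    rw [this]
    have hcast : ((M + 1 + 1 : ℕ) : ℝ) = (M : ℝ) + 1 + 1 := by push_cast; ring
    rw [hcast]
    have : Fps ν ^ (M + 1 + 1) = Fps ν ^ (M + 2) := rfl
    rw [this]
    field_simp
    ring

/-- the remainder series. -/
noncomputable def Zps (N : ℕ) : PowerSeries ℝ :=
  X * Fps ν ^ N - ∑ k ∈ Finset.Icc 1 N, C (aa ν k) * (X ^ k * Fps ν ^ (N - k))

lemma FZ (N : ℕ) : Fps ν * Zps ν N
    = X * Fps ν ^ (N + 1) - ∑ k ∈ Finset.Icc 1 N, C (aa ν k) * (X ^ k * Fps ν ^ (N + 1 - k)) := by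
  unfold Zps
  rw [mul_sub, Finset.mul_sum]
  congr 1
  · ring
  · refine Finset.sum_congr rfl fun k hk => ?_
    have hkN : k ≤ N := (Finset.mem_Icc.mp hk).2
    have : N + 1 - k = (N - k) + 1 := by omega
    rw [this, pow_succ]
    ring

lemma Z_succ (N : ℕ) :
    Zps ν (N + 1) = Fps ν * Zps ν N - C (aa ν (N + 1)) * X ^ (N + 1) := by
  rw [FZ]
  unfold Zps
  have hins : Finset.Icc 1 (N + 1) = insert (N + 1) (Finset.Icc 1 N) :=
    (Finset.insert_Icc_right_eq_Icc_add_one (by omega)).symm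
  rw [hins, Finset.sum_insert (by simp)]
  have : (N + 1 : ℕ) - (N + 1) = 0 := by omega
  rw [this, pow_zero, mul_one]
  ring

lemma coeff_Z : ∀ N : ℕ, ∀ j ≤ N, PowerSeries.coeff j (Zps ν N) = 0 := by
  intro N
  induction N with
  | zero =>
    intro j hj
    interval_cases j
    unfold Zps
    simp
  | succ N ih =>
    intro j hj
    rw [Z_succ, map_sub]
    rw [PowerSeries.coeff_mul, Finset.Nat.sum_antidiagonal_eq_sum_range_succ_mk]
    rcases Nat.lt_or_ge j (N + 1) with hlt | hge
    · have hsum : ∑ i ∈ Finset.range (j + 1),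
          PowerSeries.coeff i (Fps ν) * PowerSeries.coeff (j - i) (Zps ν N) = 0 := by
        refine Finset.sum_eq_zero fun i _ => ?_
        rw [ih (j - i) (by omega), mul_zero]
      rw [hsum, PowerSeries.coeff_C_mul, PowerSeries.coeff_X_pow, if_neg (by omega)]
      ring
    · have hjeq : j = N + 1 := by omega
      subst hjeq
      -- only i = 0 term survives
      have hsum : ∑ i ∈ Finset.range (N + 1 + 1),
          PowerSeries.coeff i (Fps ν) * PowerSeries.coeff (N + 1 - i) (Zps ν N)
          = ν 0 * PowerSeries.coeff (N + 1) (Zps ν N) := by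
        rw [Finset.sum_eq_single 0]
        · simp [Fps, PowerSeries.coeff_mk]
        · intro i _ hi0
          rw [ih (N + 1 - i) (by omega), mul_zero]
        · intro h; exact absurd (Finset.mem_range.mpr (by omega)) h
      rw [hsum, PowerSeries.coeff_C_mul, PowerSeries.coeff_X_pow, if_pos rfl, mul_one]
      -- key pairing identity : ν 0 * coeff (N+1) (Z N) = aa (N+1)
      have hkey : ν 0 * PowerSeries.coeff (N + 1) (Zps ν N) = aa ν (N + 1) := by
        have hXF : X * Fps ν ^ N
            = Zps ν N + ∑ k ∈ Finset.Icc 1 N, C (aa ν k) * (X ^ k * Fps ν ^ (N - k)) := by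
          unfold Zps; ring
        have e1 : aa ν (N + 1) = PowerSeries.coeff (N + 1) (Gps ν * (X * Fps ν ^ N)) := by
          rw [show Gps ν * (X * Fps ν ^ N) = X * (Gps ν * Fps ν ^ N) by ring,
            PowerSeries.coeff_succ_X_mul, pairing]
        rw [e1, hXF, mul_add, map_add, Finset.mul_sum, map_sum]
        have e2 : PowerSeries.coeff (N + 1) (Gps ν * Zps ν N)
            = ν 0 * PowerSeries.coeff (N + 1) (Zps ν N) := by
          rw [PowerSeries.coeff_mul, Finset.Nat.sum_antidiagonal_eq_sum_range_succ_mk]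
          rw [Finset.sum_eq_single 0]
          · congr 1
            unfold Gps
            rw [map_sub]
            have : PowerSeries.coeff 0 (X * derivativeFun (Fps ν)) = 0 := by
              rw [PowerSeries.coeff_zero_eq_constantCoeff_apply, map_mul,
                PowerSeries.constantCoeff_X, zero_mul]
            rw [this, sub_zero]
            simp [Fps, PowerSeries.coeff_mk]
          · intro i _ hi0
            rw [ih (N + 1 - i) (by omega), mul_zero]
          · intro h; exact absurd (Finset.mem_range.mpr (by omega)) h
        have e3 : ∀ k ∈ Finset.Icc 1 N,
            PowerSeries.coeff (N + 1) (Gps ν * (C (aa ν k) * (X ^ k * Fps ν ^ (N - k)))) = 0 := by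
          intro k hk
          have hk1 : 1 ≤ k := (Finset.mem_Icc.mp hk).1
          have hkN : k ≤ N := (Finset.mem_Icc.mp hk).2
          rw [show Gps ν * (C (aa ν k) * (X ^ k * Fps ν ^ (N - k)))
              = C (aa ν k) * (X ^ k * (Gps ν * Fps ν ^ (N - k))) by ring]
          rw [PowerSeries.coeff_C_mul]
          have hidx : N + 1 = ((N - k) + 1) + k := by omega
          rw [hidx, PowerSeries.coeff_X_pow_mul, coeff_G_pow, mul_zero]
        rw [e2, Finset.sum_eq_zero e3, add_zero]
      rw [hkey]
      ring

/-- The Dwass-type convolution identity. -/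
lemma key_identity (m : ℕ) (hm : 2 ≤ m) :
    ∑ k ∈ Finset.Icc 1 (m - 1), aa ν k * PowerSeries.coeff (m - 1 - k) (Fps ν ^ (m - k))
      = PowerSeries.coeff (m - 2) (Fps ν ^ m) := by
  have h0 : PowerSeries.coeff (m - 1) (Fps ν * Zps ν (m - 1)) = 0 := by
    rw [PowerSeries.coeff_mul, Finset.Nat.sum_antidiagonal_eq_sum_range_succ_mk]
    refine Finset.sum_eq_zero fun i _ => ?_
    rw [coeff_Z ν (m - 1) (m - 1 - i) (by omega), mul_zero]
  rw [FZ, map_sub] at h0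
  have e1 : PowerSeries.coeff (m - 1) (X * Fps ν ^ (m - 1 + 1))
      = PowerSeries.coeff (m - 2) (Fps ν ^ m) := by
    have h1 : m - 1 + 1 = m := by omega
    have h2 : m - 1 = (m - 2) + 1 := by omega
    rw [h1, h2, PowerSeries.coeff_succ_X_mul]
  have e2 : ∀ k ∈ Finset.Icc 1 (m - 1),
      PowerSeries.coeff (m - 1) (C (aa ν k) * (X ^ k * Fps ν ^ (m - 1 + 1 - k)))
        = aa ν k * PowerSeries.coeff (m - 1 - k) (Fps ν ^ (m - k)) := by
    intro k hk
    have hk1 : 1 ≤ k := (Finset.mem_Icc.mp hk).1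
    have hkm : k ≤ m - 1 := (Finset.mem_Icc.mp hk).2
    rw [PowerSeries.coeff_C_mul]
    have hexp : m - 1 + 1 - k = m - k := by omega
    rw [hexp, PowerSeries.coeff_X_pow_mul', if_pos (by omega : k ≤ m - 1)]
  rw [map_sum, Finset.sum_congr rfl e2, e1] at h0
  linarith [h0]

lemma naa (n : ℕ) (hn : 1 ≤ n) :
    (n : ℝ) * aa ν n = PowerSeries.coeff (n - 1) (Fps ν ^ n) := by
  unfold aa
  have : (n : ℝ) ≠ 0 := by positivity
  field_simp

/-- The symmetric form of the identity. -/
lemma final_identity (m : ℕ) (hm : 2 ≤ m) :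
    ∑ k ∈ Finset.Icc 1 (m - 1), aa ν k * aa ν (m - k)
      = (2 / (m : ℝ)) * PowerSeries.coeff (m - 2) (Fps ν ^ m) := by
  have hrefl : ∀ g : ℕ → ℝ, ∑ k ∈ Finset.Icc 1 (m - 1), g k
      = ∑ k ∈ Finset.Icc 1 (m - 1), g (m - k) := by
    intro g
    refine Finset.sum_nbij' (fun k => m - k) (fun k => m - k) ?_ ?_ ?_ ?_ ?_
    · intro a ha
      simp only [Finset.mem_Icc] at ha ⊢; omega
    · intro a ha
      simp only [Finset.mem_Icc] at ha ⊢; omega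
    · intro a ha
      simp only [Finset.mem_Icc] at ha
      show m - (m - a) = a; omega
    · intro a ha
      simp only [Finset.mem_Icc] at ha
      show m - (m - a) = a; omega
    · intro a ha
      simp only [Finset.mem_Icc] at ha
      show g a = g (m - (m - a))
      congr 1; omega
  have hM : (m : ℝ) ≠ 0 := by positivity
  have hmain : (m : ℝ) * ∑ k ∈ Finset.Icc 1 (m - 1), aa ν k * aa ν (m - k)
      = 2 * PowerSeries.coeff (m - 2) (Fps ν ^ m) := by
    have split : (m : ℝ) * ∑ k ∈ Finset.Icc 1 (m - 1), aa ν k * aa ν (m - k)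
        = (∑ k ∈ Finset.Icc 1 (m - 1), (k : ℝ) * aa ν k * aa ν (m - k))
          + ∑ k ∈ Finset.Icc 1 (m - 1), aa ν k * (((m - k : ℕ) : ℝ) * aa ν (m - k)) := by
      rw [Finset.mul_sum, ← Finset.sum_add_distrib]
      refine Finset.sum_congr rfl fun k hk => ?_
      have hk' := Finset.mem_Icc.mp hk
      have : ((m - k : ℕ) : ℝ) = (m : ℝ) - (k : ℝ) := by
        have : k ≤ m := by omega
        push_cast [Nat.cast_sub this]
        ring
      rw [this]
      ring
    have reflected : ∑ k ∈ Finset.Icc 1 (m - 1), (k : ℝ) * aa ν k * aa ν (m - k)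
        = ∑ k ∈ Finset.Icc 1 (m - 1), aa ν k * (((m - k : ℕ) : ℝ) * aa ν (m - k)) := by
      rw [hrefl (fun k => (k : ℝ) * aa ν k * aa ν (m - k))]
      refine Finset.sum_congr rfl fun k hk => ?_
      have hk' := Finset.mem_Icc.mp hk
      have : m - (m - k) = k := by omega
      rw [this]
      ring
    have heval : ∑ k ∈ Finset.Icc 1 (m - 1), aa ν k * (((m - k : ℕ) : ℝ) * aa ν (m - k))
        = PowerSeries.coeff (m - 2) (Fps ν ^ m) := by
      rw [← key_identity ν m hm]
      refine Finset.sum_congr rfl fun k hk => ?_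
      have hk' := Finset.mem_Icc.mp hk
      rw [naa ν (m - k) (by omega)]
      have : m - k - 1 = m - 1 - k := by omega
      rw [this]
    rw [split, reflected, heval]
    ring
  calc ∑ k ∈ Finset.Icc 1 (m - 1), aa ν k * aa ν (m - k)
      = (1 / (m : ℝ)) * ((m : ℝ) * ∑ k ∈ Finset.Icc 1 (m - 1), aa ν k * aa ν (m - k)) := by
        field_simp
    _ = (2 / (m : ℝ)) * PowerSeries.coeff (m - 2) (Fps ν ^ m) := by
        rw [hmain]; ring

end TwoAncestorAux

/-- if T = T₁ + T₂ with T₁, T₂ independent copies of the total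
progeny of a Galton-Watson process with offspring law ν (whose law is given by
the Dwass/Otter formula P(T₁ = n) = (1/n)ν^{*n}(n−1) for n ≥ 1), then for
m ≥ 2, P(T = m) = (2/m)·ν^{*m}(m−2). -/
theorem two_ancestor_progeny {Ω : Type*} [MeasurableSpace Ω] (μ : Measure Ω)
    [IsProbabilityMeasure μ] (ν : ℕ → ℝ) (hν : ∀ n, 0 ≤ ν n) (hν1 : ∑' n : ℕ, ν n = 1)
    (T₁ T₂ : Ω → ℕ) (hm₁ : Measurable T₁) (hm₂ : Measurable T₂)
    (hindep : IndepFun T₁ T₂ μ)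
    (hlaw₁ : ∀ n : ℕ, 1 ≤ n → (μ {ω | T₁ ω = n}).toReal = (1 / (n : ℝ)) * convPow ν n (n - 1))
    (hlaw₂ : ∀ n : ℕ, 1 ≤ n → (μ {ω | T₂ ω = n}).toReal = (1 / (n : ℝ)) * convPow ν n (n - 1))
    (h0₁ : μ {ω | T₁ ω = 0} = 0) (h0₂ : μ {ω | T₂ ω = 0} = 0) :
    ∀ m : ℕ, 2 ≤ m →
      (μ {ω | T₁ ω + T₂ ω = m}).toReal = (2 / (m : ℝ)) * convPow ν m (m - 2) := by
  intro m hm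
  classical
  -- decompose the event
  set A : ℕ → Set Ω := fun k => T₁ ⁻¹' {k} ∩ T₂ ⁻¹' {m - k} with hA
  have hunion : {ω | T₁ ω + T₂ ω = m} = ⋃ k ∈ Finset.range (m + 1), A k := by
    ext ω
    simp only [Set.mem_setOf_eq, Set.mem_iUnion, Finset.mem_range, hA,
      Set.mem_inter_iff, Set.mem_preimage, Set.mem_singleton_iff]
    constructor
    · intro h
      exact ⟨T₁ ω, by omega, rfl, by omega⟩
    · rintro ⟨k, hk, h1, h2⟩
      omega
  have hmeas : ∀ k, MeasurableSet (A k) :=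
    fun k => (hm₁ (measurableSet_singleton _)).inter (hm₂ (measurableSet_singleton _))
  have hdisj : (↑(Finset.range (m + 1)) : Set ℕ).PairwiseDisjoint A := by
    intro i _ j _ hij
    refine Set.disjoint_left.mpr fun ω hωi hωj => ?_
    exact hij (hωi.1.symm.trans hωj.1)
  have hμsum : μ {ω | T₁ ω + T₂ ω = m} = ∑ k ∈ Finset.range (m + 1), μ (A k) := by
    rw [hunion]
    exact measure_biUnion_finset hdisj fun k _ => hmeas k
  have hprod : ∀ k, μ (A k) = μ (T₁ ⁻¹' {k}) * μ (T₂ ⁻¹' {m - k}) := fun k =>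
    hindep.measure_inter_preimage_eq_mul _ _ (measurableSet_singleton _)
      (measurableSet_singleton _)
  have hpre₁ : ∀ k, T₁ ⁻¹' {k} = {ω | T₁ ω = k} := fun k => rfl
  have hpre₂ : ∀ k, T₂ ⁻¹' {k} = {ω | T₂ ω = k} := fun k => rfl
  -- toReal of the sum
  have hfin : ∀ k ∈ Finset.range (m + 1), μ (A k) ≠ ⊤ := fun k _ => measure_ne_top μ _
  have htoReal : (μ {ω | T₁ ω + T₂ ω = m}).toReal
      = ∑ k ∈ Finset.range (m + 1), (μ (A k)).toReal := by
    rw [hμsum, ENNReal.toReal_sum hfin]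
  -- values of each term
  have hterm0 : (μ (A 0)).toReal = 0 := by
    have : μ (A 0) = 0 := by
      rw [hprod, hpre₁, h0₁, zero_mul]
    rw [this, ENNReal.toReal_zero]
  have htermm : (μ (A m)).toReal = 0 := by
    have : μ (A m) = 0 := by
      rw [hprod, hpre₂]
      have : m - m = 0 := by omega
      rw [this, h0₂, mul_zero]
    rw [this, ENNReal.toReal_zero]
  have htermk : ∀ k ∈ Finset.Icc 1 (m - 1),
      (μ (A k)).toReal = TwoAncestorAux.aa ν k * TwoAncestorAux.aa ν (m - k) := by
    intro k hk
    have hk' := Finset.mem_Icc.mp hk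
    rw [hprod, ENNReal.toReal_mul, hpre₁, hpre₂, hlaw₁ k (by omega), hlaw₂ (m - k) (by omega)]
    unfold TwoAncestorAux.aa
    rw [TwoAncestorAux.convPow_eq_coeff, TwoAncestorAux.convPow_eq_coeff]
  -- restrict sum to Icc 1 (m-1)
  have hsub : Finset.Icc 1 (m - 1) ⊆ Finset.range (m + 1) := by
    intro k hk
    have := Finset.mem_Icc.mp hk
    exact Finset.mem_range.mpr (by omega)
  have hsum_eq : ∑ k ∈ Finset.range (m + 1), (μ (A k)).toReal
      = ∑ k ∈ Finset.Icc 1 (m - 1), (μ (A k)).toReal := by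
    refine (Finset.sum_subset hsub fun k hkr hknot => ?_).symm
    have hkm : k ≤ m := by
      have := Finset.mem_range.mp hkr; omega
    have : k = 0 ∨ k = m := by
      rcases Finset.mem_Icc.not.mp hknot with h
      omega
    rcases this with h | h
    · rw [h]; exact hterm0
    · rw [h]; exact htermm
  rw [htoReal, hsum_eq, Finset.sum_congr rfl htermk,
    TwoAncestorAux.final_identity ν m hm, TwoAncestorAux.convPow_eq_coeff]
end
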